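/- arXiv:2112.12270 — 7 statements merged into one kernel-verified Lean document; each statement's English description precedes it below -/
import Mathlib

section
/- The single-target imaging functional admits the exact closed form F_ε(y) = (1/|ρ₀|) · (1/N) Σ_{n=1}^{N} [ (1/ε − (1/ε − 1)|Φ_n(y)|²) · |x_n − y₀|²/|x_n − y|² ], where Φ_n(y) = (1/M) Σ_{m=1}^{M} e^{iω_m Δτ_n(y)} and Δτ_n(y) = 2(|x_n − y| − |x_n − y₀|)/c. -/
open Real


lemma quad_form {M : ℕ} (σ e : ℂ) (u a : Fin M → ℂ) :
    dotProduct (fun m => (starRingEnd ℂ) (a m))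
      ((σ • (Matrix.vecMulVec u (fun m => (starRingEnd ℂ) (u m))
        + e • ((1 : Matrix (Fin M) (Fin M) ℂ)
          - Matrix.vecMulVec u (fun m => (starRingEnd ℂ) (u m))))).mulVec a)
    = σ * ((starRingEnd ℂ) (∑ m, (starRingEnd ℂ) (u m) * a m) * (∑ m, (starRingEnd ℂ) (u m) * a m)
        + e * ((∑ m, (starRingEnd ℂ) (a m) * a m)
          - (starRingEnd ℂ) (∑ m, (starRingEnd ℂ) (u m) * a m) * (∑ m, (starRingEnd ℂ) (u m) * a m))) := by
  set S : ℂ := ∑ m, (starRingEnd ℂ) (u m) * a m with hSdef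
  have hP : (Matrix.vecMulVec u (fun m => (starRingEnd ℂ) (u m))).mulVec a = fun i => u i * S := by
    funext i
    simp [Matrix.mulVec, dotProduct, Matrix.vecMulVec_apply, Finset.mul_sum, mul_assoc, hSdef]
  have hdot : dotProduct (fun m => (starRingEnd ℂ) (a m)) (fun i => u i * S)
      = (starRingEnd ℂ) S * S := by
    simp only [dotProduct]
    simp only [hSdef, map_sum, Finset.sum_mul, map_mul, Complex.conj_conj]
    refine Finset.sum_congr rfl fun i _ => ?_
    ring
  rw [Matrix.smul_mulVec, Matrix.add_mulVec, Matrix.smul_mulVec,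
    Matrix.sub_mulVec, Matrix.one_mulVec, hP]
  rw [dotProduct_smul, dotProduct_add, dotProduct_smul,
    dotProduct_sub, hdot]
  simp only [smul_eq_mul, dotProduct]

lemma conj_mul_self_eq (z : ℂ) : (starRingEnd ℂ) z * z = ((‖z‖ ^ 2 : ℝ) : ℂ) := by
  rw [mul_comm, Complex.mul_conj, ← Complex.sq_norm]

/-- Closed form for the single-target imaging functional:
`F_ε(y) = (1/|ρ₀|) (1/N) Σ_n [ (1/ε − (1/ε − 1)|Φ_n|²) · |x_n − y₀|²/|x_n − y|² ]`,
where `Φ_n = (1/M) Σ_m e^{iω_m Δτ_n}` and `Δτ_n = 2(|x_n − y| − |x_n − y₀|)/c`.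
Indices are 0-based: `ω m = ω₁ + m Δω` for `m = 0, …, M-1`. -/
theorem imaging_functional_closed_form
    (M N : ℕ) (hM : 1 ≤ M) (hN : 1 ≤ N)
    (c ω₁ Δω θ₀ ε : ℝ) (hc : 0 < c) (hε : 0 < ε)
    (ω : ℕ → ℝ) (hω : ∀ m, ω m = ω₁ + m * Δω)
    (x : Fin N → EuclideanSpace ℝ (Fin 3)) (y₀ y : EuclideanSpace ℝ (Fin 3))
    (hxy₀ : ∀ n, x n ≠ y₀) (hxy : ∀ n, x n ≠ y)
    (ρ₀ : ℂ) (hρ₀ : ρ₀ ≠ 0)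
    (hρ : ρ₀ = (‖ρ₀‖ : ℂ) * Complex.exp (θ₀ * Complex.I))
    (u : Fin N → Fin M → ℂ)
    (hu : ∀ n (m : Fin M), u n m = Complex.exp (Complex.I * (θ₀ / 2)) / (Real.sqrt M : ℂ)
      * Complex.exp (Complex.I * (2 * ω m.val * ‖x n - y₀‖ / c)))
    (a : Fin N → Fin M → ℂ)
    (ha : ∀ n (m : Fin M), a n m =
      Complex.exp (Complex.I * (2 * ω m.val * ‖x n - y‖ / c)) / ((4 * π * ‖x n - y‖ : ℝ) : ℂ))
    (Mn : Fin N → Matrix (Fin M) (Fin M) ℂ)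
    (hMn : ∀ n, Mn n = (((4 * π * ‖x n - y₀‖) ^ 2 / (M * ‖ρ₀‖) : ℝ) : ℂ)
      • (Matrix.vecMulVec (u n) (fun m => (starRingEnd ℂ) (u n m))
        + ((ε⁻¹ : ℝ) : ℂ) • ((1 : Matrix (Fin M) (Fin M) ℂ)
          - Matrix.vecMulVec (u n) (fun m => (starRingEnd ℂ) (u n m)))))
    (Δτ : Fin N → ℝ) (hΔτ : ∀ n, Δτ n = 2 * (‖x n - y‖ - ‖x n - y₀‖) / c)
    (Φ : Fin N → ℂ)
    (hΦ : ∀ n, Φ n = (1 / (M : ℂ)) * ∑ m : Fin M, Complex.exp (Complex.I * (ω m.val * Δτ n)))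
    (F : ℂ)
    (hF : F = (1 / (N : ℂ)) * ∑ n : Fin N,
      dotProduct (fun m => (starRingEnd ℂ) (a n m)) ((Mn n).mulVec (a n))) :
    F = (((1 / ‖ρ₀‖) * ((1 : ℝ) / N) * ∑ n : Fin N,
      ((1 / ε - (1 / ε - 1) * ‖Φ n‖ ^ 2)
        * (‖x n - y₀‖ ^ 2 / ‖x n - y‖ ^ 2)) : ℝ) : ℂ) := by
  have hπ : (0:ℝ) < π := Real.pi_pos
  have hMpos : (0:ℝ) < M := by exact_mod_cast Nat.lt_of_lt_of_le Nat.zero_lt_one hM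
  have hMC : (M:ℂ) ≠ 0 := Nat.cast_ne_zero.mpr (by omega)
  have hρabs : ‖ρ₀‖ ≠ 0 := by simpa using hρ₀
  have hsM : Real.sqrt M ≠ 0 := by positivity
  have key : ∀ n : Fin N,
      dotProduct (fun m => (starRingEnd ℂ) (a n m)) ((Mn n).mulVec (a n))
      = (((1 / ‖ρ₀‖) * ((1 / ε - (1 / ε - 1) * ‖Φ n‖ ^ 2)
        * (‖x n - y₀‖ ^ 2 / ‖x n - y‖ ^ 2)) : ℝ) : ℂ) := by
    intro n
    have hr : (0:ℝ) < ‖x n - y‖ := norm_pos_iff.mpr (sub_ne_zero.mpr (hxy n))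
    have hr₀ : (0:ℝ) < ‖x n - y₀‖ := norm_pos_iff.mpr (sub_ne_zero.mpr (hxy₀ n))
    have hd : ((4 * π * ‖x n - y‖ : ℝ) : ℂ) ≠ 0 := by
      exact_mod_cast (by positivity : (4 * π * ‖x n - y‖ : ℝ) ≠ 0)
    have hsMC : ((Real.sqrt M : ℝ) : ℂ) ≠ 0 := by exact_mod_cast hsM
    -- the constant K
    set K : ℂ := (starRingEnd ℂ) (Complex.exp (Complex.I * (θ₀ / 2)))
        / ((Real.sqrt M * (4 * π * ‖x n - y‖) : ℝ) : ℂ) with hK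
    have hterm : ∀ m : Fin M, (starRingEnd ℂ) (u n m) * a n m
        = K * Complex.exp (Complex.I * (ω m.val * (Δτ n : ℝ))) := by
      intro m
      rw [hu n m, ha n m]
      have hE : (starRingEnd ℂ) (Complex.exp (Complex.I * (2 * ω m.val * ‖x n - y₀‖ / c)))
          * Complex.exp (Complex.I * (2 * ω m.val * ‖x n - y‖ / c))
          = Complex.exp (Complex.I * (ω m.val * (Δτ n : ℝ))) := by
        rw [← Complex.exp_conj, ← Complex.exp_add]
        congr 1
        simp only [map_mul, map_div₀, Complex.conj_I, Complex.conj_ofReal, map_ofNat]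
        rw [hΔτ n]
        push_cast
        field_simp
        ring
      rw [map_mul, map_div₀, Complex.conj_ofReal]
      rw [hK]
      push_cast
      linear_combination ((starRingEnd ℂ) (Complex.exp (Complex.I * (θ₀ / 2)))
        / ((Real.sqrt M : ℂ) * ((4:ℂ) * π * ‖x n - y‖))) * hE
    have habsK : ‖K‖ = 1 / (Real.sqrt M * (4 * π * ‖x n - y‖)) := by
      rw [hK]
      rw [norm_div, Complex.norm_conj, Complex.norm_exp, Complex.norm_real, Real.norm_eq_abs]
      rw [abs_of_pos (by positivity)]
      simp [Complex.mul_re]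
    have hS : (∑ m : Fin M, (starRingEnd ℂ) (u n m) * a n m) = K * ((M:ℂ) * Φ n) := by
      rw [Finset.sum_congr rfl (fun m _ => hterm m), ← Finset.mul_sum, hΦ n]
      field_simp
      congr 1
      refine Finset.sum_congr rfl fun m _ => ?_
      ring_nf
    have habs2 : ‖K * ((M:ℂ) * Φ n)‖ ^ 2
        = (M : ℝ) * ‖Φ n‖ ^ 2 / (4 * π * ‖x n - y‖) ^ 2 := by
      rw [norm_mul, norm_mul, Complex.norm_natCast, habsK]
      have h4 : Real.sqrt M ^ 2 = (M:ℝ) := Real.sq_sqrt hMpos.le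
      field_simp
      linear_combination (-‖Φ n‖ ^ 2) * h4
    have hA : (∑ m : Fin M, (starRingEnd ℂ) (a n m) * a n m)
        = (((M : ℝ) / (4 * π * ‖x n - y‖) ^ 2 : ℝ) : ℂ) := by
      have h1 : ∀ m : Fin M, (starRingEnd ℂ) (a n m) * a n m
          = (((1 : ℝ) / (4 * π * ‖x n - y‖) ^ 2 : ℝ) : ℂ) := by
        intro m
        rw [conj_mul_self_eq]
        congr 1
        rw [ha n m, norm_div, Complex.norm_exp, Complex.norm_real, Real.norm_eq_abs, abs_of_pos (by positivity)]
        simp [Complex.mul_re, div_pow]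
        field_simp
      rw [Finset.sum_congr rfl (fun m _ => h1 m)]
      rw [Finset.sum_const, Finset.card_univ, Fintype.card_fin]
      push_cast
      ring
    rw [hMn n, quad_form, hS, hA, conj_mul_self_eq, habs2]
    push_cast
    have hgoal : ((4 * π * ‖x n - y₀‖) ^ 2 / ((M:ℝ) * ‖ρ₀‖))
        * (((M:ℝ) * ‖Φ n‖ ^ 2 / (4 * π * ‖x n - y‖) ^ 2)
          + ε⁻¹ * ((M:ℝ) / (4 * π * ‖x n - y‖) ^ 2
            - (M:ℝ) * ‖Φ n‖ ^ 2 / (4 * π * ‖x n - y‖) ^ 2))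
        = (1 / ‖ρ₀‖) * ((1 / ε - (1 / ε - 1) * ‖Φ n‖ ^ 2)
          * (‖x n - y₀‖ ^ 2 / ‖x n - y‖ ^ 2)) := by
      field_simp
      ring
    have hgoalC := congrArg (fun t : ℝ => (t : ℂ)) hgoal
    push_cast at hgoalC
    linear_combination hgoalC
  rw [hF]
  simp only [key]
  push_cast
  rw [← Finset.mul_sum]
  ring
end

section
/- Evaluated at the true target location, the single-target imaging functional satisfies F_ε(y₀) = 1/|ρ₀|, and hence 1/F_ε(y₀) = |ρ₀|. -/
open Real

lemma conj_exp_unit (t : ℂ) (h : (starRingEnd ℂ) t = -t) :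
    (starRingEnd ℂ) (Complex.exp t) * Complex.exp t = 1 := by
  rw [← Complex.exp_conj, ← Complex.exp_add, h, neg_add_cancel, Complex.exp_zero]

/-- Evaluated at the true target location, the single-target imaging functional satisfies
`F_ε(y₀) = 1/|ρ₀|`, hence `1/F_ε(y₀) = |ρ₀|`.
Indices are 0-based: `ω m = ω₁ + m Δω` for `m = 0, …, M-1`. -/
theorem imaging_functional_at_target
    (M N : ℕ) (hM : 1 ≤ M) (hN : 1 ≤ N)
    (c ω₁ Δω θ₀ ε : ℝ) (hc : 0 < c) (hε : 0 < ε)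
    (ω : ℕ → ℝ) (hω : ∀ m, ω m = ω₁ + m * Δω)
    (x : Fin N → EuclideanSpace ℝ (Fin 3)) (y₀ : EuclideanSpace ℝ (Fin 3))
    (hxy₀ : ∀ n, x n ≠ y₀)
    (ρ₀ : ℂ) (hρ₀ : ρ₀ ≠ 0)
    (hρ : ρ₀ = ((‖ρ₀‖ : ℝ) : ℂ) * Complex.exp (θ₀ * Complex.I))
    (u : Fin N → Fin M → ℂ)
    (hu : ∀ n (m : Fin M), u n m = Complex.exp (Complex.I * (θ₀ / 2)) / (Real.sqrt M : ℂ)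
      * Complex.exp (Complex.I * (2 * ω m.val * ‖x n - y₀‖ / c)))
    (a : Fin N → Fin M → ℂ)
    (ha : ∀ n (m : Fin M), a n m =
      Complex.exp (Complex.I * (2 * ω m.val * ‖x n - y₀‖ / c)) / ((4 * π * ‖x n - y₀‖ : ℝ) : ℂ))
    (Mn : Fin N → Matrix (Fin M) (Fin M) ℂ)
    (hMn : ∀ n, Mn n = (((4 * π * ‖x n - y₀‖) ^ 2 / (M * ‖ρ₀‖) : ℝ) : ℂ)
      • (Matrix.vecMulVec (u n) (fun m => (starRingEnd ℂ) (u n m))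
        + ((ε⁻¹ : ℝ) : ℂ) • ((1 : Matrix (Fin M) (Fin M) ℂ)
          - Matrix.vecMulVec (u n) (fun m => (starRingEnd ℂ) (u n m)))))
    (F : ℂ)
    (hF : F = (1 / (N : ℂ)) * ∑ n : Fin N,
      dotProduct (fun m => (starRingEnd ℂ) (a n m)) ((Mn n).mulVec (a n))) :
    F = ((1 / ‖ρ₀‖ : ℝ) : ℂ) ∧ 1 / F = ((‖ρ₀‖ : ℝ) : ℂ) := by
  have hπ : (0:ℝ) < π := Real.pi_pos
  have habs : (0:ℝ) < ‖ρ₀‖ := by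
    exact norm_pos_iff.mpr hρ₀
  have hMR : (0:ℝ) < (M:ℝ) := by exact_mod_cast hM
  have hsM : (0:ℝ) < Real.sqrt M := Real.sqrt_pos.mpr hMR
  have hsMc : ((Real.sqrt M : ℝ) : ℂ) ≠ 0 := by exact_mod_cast hsM.ne'
  have hMsM : ((Real.sqrt M : ℝ) : ℂ) * ((Real.sqrt M : ℝ) : ℂ)⁻¹ = 1 := mul_inv_cancel₀ hsMc
  have hMc : ((Real.sqrt M : ℝ) : ℂ) * ((Real.sqrt M : ℝ) : ℂ) = (M : ℂ) := by
    rw [← Complex.ofReal_mul, Real.mul_self_sqrt (Nat.cast_nonneg M)]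
    simp
  have he1 : (starRingEnd ℂ) (Complex.exp (Complex.I * (θ₀ / 2)))
      * Complex.exp (Complex.I * (θ₀ / 2)) = 1 :=
    conj_exp_unit _ (by simp [map_ofNat])
  have key : ∀ n : Fin N,
      dotProduct (fun m => (starRingEnd ℂ) (a n m)) ((Mn n).mulVec (a n))
        = ((1 / ‖ρ₀‖ : ℝ) : ℂ) := by
    intro n
    have hr : 0 < ‖x n - y₀‖ := norm_pos_iff.mpr (sub_ne_zero.mpr (hxy₀ n))
    have h4 : (4 * π * ‖x n - y₀‖) ≠ 0 := by positivity
    have h4c : ((4 * π * ‖x n - y₀‖ : ℝ) : ℂ) ≠ 0 := by exact_mod_cast h4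
    have hE : ∀ k : Fin M,
        (starRingEnd ℂ) (Complex.exp (Complex.I * (2 * ω k.val * ‖x n - y₀‖ / c)))
          * Complex.exp (Complex.I * (2 * ω k.val * ‖x n - y₀‖ / c)) = 1 := fun k =>
      conj_exp_unit _ (by simp [map_ofNat])
    have hsum : ∑ k : Fin M, (starRingEnd ℂ) (u n k) * a n k
        = (Real.sqrt M : ℂ) * (starRingEnd ℂ) (Complex.exp (Complex.I * (θ₀ / 2)))
          / ((4 * π * ‖x n - y₀‖ : ℝ) : ℂ) := by
      have hterm : ∀ k : Fin M, (starRingEnd ℂ) (u n k) * a n k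
          = (starRingEnd ℂ) (Complex.exp (Complex.I * (θ₀ / 2)))
            / ((Real.sqrt M : ℂ) * ((4 * π * ‖x n - y₀‖ : ℝ) : ℂ)) := by
        intro k
        rw [hu, ha, map_mul, map_div₀, Complex.conj_ofReal]
        linear_combination ((starRingEnd ℂ) (Complex.exp (Complex.I * (θ₀ / 2)))
          / ((Real.sqrt M : ℂ) * ((4 * π * ‖x n - y₀‖ : ℝ) : ℂ))) * hE k
      rw [Finset.sum_congr rfl (fun k _ => hterm k), Finset.sum_const, Finset.card_univ,
        Fintype.card_fin, nsmul_eq_mul]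
      linear_combination (-(starRingEnd ℂ) (Complex.exp (Complex.I * (θ₀ / 2)))
        / ((Real.sqrt M : ℂ) * ((4 * π * ‖x n - y₀‖ : ℝ) : ℂ))) * hMc
        + ((starRingEnd ℂ) (Complex.exp (Complex.I * (θ₀ / 2))) * (Real.sqrt M : ℂ)
          / ((4 * π * ‖x n - y₀‖ : ℝ) : ℂ)) * hMsM
    have hκu : ∀ m : Fin M,
        ((Real.sqrt M : ℂ) * (starRingEnd ℂ) (Complex.exp (Complex.I * (θ₀ / 2)))
          / ((4 * π * ‖x n - y₀‖ : ℝ) : ℂ)) * u n m = a n m := by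
      intro m
      rw [hu, ha]
      linear_combination ((Real.sqrt M : ℂ) * ((Real.sqrt M : ℂ))⁻¹
          * Complex.exp (Complex.I * (2 * ω m.val * ‖x n - y₀‖ / c))
          / ((4 * π * ‖x n - y₀‖ : ℝ) : ℂ)) * he1
        + (Complex.exp (Complex.I * (2 * ω m.val * ‖x n - y₀‖ / c))
          / ((4 * π * ‖x n - y₀‖ : ℝ) : ℂ)) * hMsM
    have hmv : ∀ m : Fin M, (Mn n).mulVec (a n) m
        = (((4 * π * ‖x n - y₀‖) ^ 2 / (M * ‖ρ₀‖) : ℝ) : ℂ) * a n m := by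
      intro m
      have hexp : ∀ k ∈ Finset.univ, (Mn n) m k * a n k
          = (((4 * π * ‖x n - y₀‖) ^ 2 / (M * ‖ρ₀‖) : ℝ) : ℂ) * u n m
              * ((starRingEnd ℂ) (u n k) * a n k)
            + (((4 * π * ‖x n - y₀‖) ^ 2 / (M * ‖ρ₀‖) : ℝ) : ℂ) * ((ε⁻¹ : ℝ) : ℂ)
              * (if k = m then a n m else 0)
            - (((4 * π * ‖x n - y₀‖) ^ 2 / (M * ‖ρ₀‖) : ℝ) : ℂ) * ((ε⁻¹ : ℝ) : ℂ)
              * u n m * ((starRingEnd ℂ) (u n k) * a n k) := by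
        intro k _
        rw [hMn]
        simp only [Matrix.smul_apply, Matrix.add_apply, Matrix.sub_apply,
          Matrix.vecMulVec_apply, smul_eq_mul]
        by_cases hkm : k = m
        · subst hkm
          rw [Matrix.one_apply_eq, if_pos rfl]
          ring
        · rw [Matrix.one_apply_ne (Ne.symm hkm), if_neg hkm]
          ring
      calc (Mn n).mulVec (a n) m = ∑ k, (Mn n) m k * a n k := rfl
        _ = ∑ k, ((((4 * π * ‖x n - y₀‖) ^ 2 / (M * ‖ρ₀‖) : ℝ) : ℂ) * u n m
              * ((starRingEnd ℂ) (u n k) * a n k)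
            + (((4 * π * ‖x n - y₀‖) ^ 2 / (M * ‖ρ₀‖) : ℝ) : ℂ) * ((ε⁻¹ : ℝ) : ℂ)
              * (if k = m then a n m else 0)
            - (((4 * π * ‖x n - y₀‖) ^ 2 / (M * ‖ρ₀‖) : ℝ) : ℂ) * ((ε⁻¹ : ℝ) : ℂ)
              * u n m * ((starRingEnd ℂ) (u n k) * a n k)) :=
            Finset.sum_congr rfl hexp
        _ = (((4 * π * ‖x n - y₀‖) ^ 2 / (M * ‖ρ₀‖) : ℝ) : ℂ) * u n m
              * ((Real.sqrt M : ℂ) * (starRingEnd ℂ) (Complex.exp (Complex.I * (θ₀ / 2)))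
                / ((4 * π * ‖x n - y₀‖ : ℝ) : ℂ))
            + (((4 * π * ‖x n - y₀‖) ^ 2 / (M * ‖ρ₀‖) : ℝ) : ℂ) * ((ε⁻¹ : ℝ) : ℂ)
              * a n m
            - (((4 * π * ‖x n - y₀‖) ^ 2 / (M * ‖ρ₀‖) : ℝ) : ℂ) * ((ε⁻¹ : ℝ) : ℂ)
              * u n m * ((Real.sqrt M : ℂ)
                * (starRingEnd ℂ) (Complex.exp (Complex.I * (θ₀ / 2)))
                / ((4 * π * ‖x n - y₀‖ : ℝ) : ℂ)) := by
            rw [Finset.sum_sub_distrib, Finset.sum_add_distrib, ← Finset.mul_sum,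
              ← Finset.mul_sum, ← Finset.mul_sum, hsum,
              Finset.sum_ite_eq' Finset.univ m (fun _ => a n m), if_pos (Finset.mem_univ m)]
        _ = (((4 * π * ‖x n - y₀‖) ^ 2 / (M * ‖ρ₀‖) : ℝ) : ℂ) * a n m := by
            linear_combination ((((4 * π * ‖x n - y₀‖) ^ 2 / (M * ‖ρ₀‖) : ℝ) : ℂ)
              - (((4 * π * ‖x n - y₀‖) ^ 2 / (M * ‖ρ₀‖) : ℝ) : ℂ)
                * ((ε⁻¹ : ℝ) : ℂ)) * hκu m
    have haa : ∀ m : Fin M, (starRingEnd ℂ) (a n m) * a n m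
        = 1 / (((4 * π * ‖x n - y₀‖ : ℝ) : ℂ) * ((4 * π * ‖x n - y₀‖ : ℝ) : ℂ)) := by
      intro m
      rw [ha, map_div₀, Complex.conj_ofReal]
      linear_combination (1 / (((4 * π * ‖x n - y₀‖ : ℝ) : ℂ)
        * ((4 * π * ‖x n - y₀‖ : ℝ) : ℂ))) * hE m
    have hdot : dotProduct (fun m => (starRingEnd ℂ) (a n m)) ((Mn n).mulVec (a n))
        = ∑ _m : Fin M, (((4 * π * ‖x n - y₀‖) ^ 2 / (M * ‖ρ₀‖) : ℝ) : ℂ)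
            * (1 / (((4 * π * ‖x n - y₀‖ : ℝ) : ℂ) * ((4 * π * ‖x n - y₀‖ : ℝ) : ℂ))) := by
      simp only [dotProduct]
      refine Finset.sum_congr rfl fun m _ => ?_
      rw [hmv m, show (starRingEnd ℂ) (a n m)
          * ((((4 * π * ‖x n - y₀‖) ^ 2 / (M * ‖ρ₀‖) : ℝ) : ℂ) * a n m)
        = (((4 * π * ‖x n - y₀‖) ^ 2 / (M * ‖ρ₀‖) : ℝ) : ℂ)
          * ((starRingEnd ℂ) (a n m) * a n m) from by ring, haa m]
    rw [hdot, Finset.sum_const, Finset.card_univ, Fintype.card_fin, nsmul_eq_mul]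
    have hreal : (M:ℝ) * ((4 * π * ‖x n - y₀‖) ^ 2 / (M * ‖ρ₀‖)
        * (1 / ((4 * π * ‖x n - y₀‖) * (4 * π * ‖x n - y₀‖)))) = 1 / ‖ρ₀‖ := by
      field_simp
    calc (M : ℂ) * ((((4 * π * ‖x n - y₀‖) ^ 2 / (M * ‖ρ₀‖) : ℝ) : ℂ)
          * (1 / (((4 * π * ‖x n - y₀‖ : ℝ) : ℂ) * ((4 * π * ‖x n - y₀‖ : ℝ) : ℂ))))
        = (((M:ℝ) * ((4 * π * ‖x n - y₀‖) ^ 2 / (M * ‖ρ₀‖)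
            * (1 / ((4 * π * ‖x n - y₀‖) * (4 * π * ‖x n - y₀‖)))) : ℝ) : ℂ) := by
          push_cast
          ring
      _ = ((1 / ‖ρ₀‖ : ℝ) : ℂ) := by rw [hreal]
  have hNc : (N : ℂ) ≠ 0 := by
    exact_mod_cast (Nat.cast_ne_zero (R := ℂ)).mpr (by omega)
  have hF' : F = ((1 / ‖ρ₀‖ : ℝ) : ℂ) := by
    rw [hF, Finset.sum_congr rfl (fun n _ => key n), Finset.sum_const, Finset.card_univ,
      Fintype.card_fin, nsmul_eq_mul, one_div, inv_mul_cancel_left₀ hNc]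
  refine ⟨hF', ?_⟩
  rw [hF']
  push_cast
  rw [one_div_one_div]
end

section
/- For the quadratic cross-range image model, the full-width/half-maximum equation G(x₀ + Δ) = 2 has exactly the two solutions Δ = ± √(ε/(1−ε)) · (6/π) · (c/B) · (L/a) · √((M−1)/(M+1)) · √((N−1)/((N+1) + 12(N−1)(x₀²/a²))). In particular the cross-range resolution is proportional to √(ε/(1−ε)). -/
open Real

/-- FWHM of the quadratic cross-range image model: the equation `G(x₀ + Δ) = 2` has
exactly the two solutions
`Δ = ± √(ε/(1−ε)) (6/π)(c/B)(L/a) √((M−1)/(M+1)) √((N−1)/((N+1) + 12(N−1)(x₀²/a²)))`. -/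
theorem cross_range_fwhm
    (M N : ℕ) (hM : 2 ≤ M) (hN : 2 ≤ N)
    (c B L a x₀ ε : ℝ) (hc : 0 < c) (hB : 0 < B) (hL : 0 < L) (ha : 0 < a)
    (hε0 : 0 < ε) (hε1 : ε < 1)
    (K : ℝ)
    (hK : K = π ^ 2 * B ^ 2 * a ^ 2 / (3 * c ^ 2 * L ^ 2) * (((M : ℝ) + 1) / ((M : ℝ) - 1))
      * ((1 / 12) * (((N : ℝ) + 1) / ((N : ℝ) - 1)) + x₀ ^ 2 / a ^ 2))
    (G : ℝ → ℝ) (hG : ∀ x, G x = 1 + (1 / ε - 1) * K * (x - x₀) ^ 2)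
    (D : ℝ)
    (hD : D = Real.sqrt (ε / (1 - ε)) * (6 / π) * (c / B) * (L / a)
      * Real.sqrt (((M : ℝ) - 1) / ((M : ℝ) + 1))
      * Real.sqrt (((N : ℝ) - 1) / (((N : ℝ) + 1) + 12 * ((N : ℝ) - 1) * (x₀ ^ 2 / a ^ 2)))) :
    ∀ Δ : ℝ, G (x₀ + Δ) = 2 ↔ (Δ = D ∨ Δ = -D) := by
  have hm1 : (0:ℝ) < (M : ℝ) - 1 := by
    have : (2:ℝ) ≤ (M : ℝ) := by exact_mod_cast hM
    linarith
  have hm2 : (0:ℝ) < (M : ℝ) + 1 := by positivity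
  have hn1 : (0:ℝ) < (N : ℝ) - 1 := by
    have : (2:ℝ) ≤ (N : ℝ) := by exact_mod_cast hN
    linarith
  have hn2 : (0:ℝ) < (N : ℝ) + 1 := by positivity
  have hS : (0:ℝ) < ((N : ℝ) + 1) + 12 * ((N : ℝ) - 1) * (x₀ ^ 2 / a ^ 2) := by positivity
  have hπ : (0:ℝ) < π := Real.pi_pos
  have h1ε : (0:ℝ) < 1 - ε := by linarith
  have h1 : Real.sqrt (ε / (1 - ε)) ^ 2 = ε / (1 - ε) :=
    Real.sq_sqrt (by positivity)
  have h2 : Real.sqrt (((M : ℝ) - 1) / ((M : ℝ) + 1)) ^ 2 = ((M : ℝ) - 1) / ((M : ℝ) + 1) :=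
    Real.sq_sqrt (by positivity)
  have h3 : Real.sqrt (((N : ℝ) - 1) / (((N : ℝ) + 1) + 12 * ((N : ℝ) - 1) * (x₀ ^ 2 / a ^ 2))) ^ 2
      = ((N : ℝ) - 1) / (((N : ℝ) + 1) + 12 * ((N : ℝ) - 1) * (x₀ ^ 2 / a ^ 2)) :=
    Real.sq_sqrt (by positivity)
  have hDsq : D ^ 2 = (ε / (1 - ε)) * (6 / π) ^ 2 * (c / B) ^ 2 * (L / a) ^ 2
      * (((M : ℝ) - 1) / ((M : ℝ) + 1))
      * (((N : ℝ) - 1) / (((N : ℝ) + 1) + 12 * ((N : ℝ) - 1) * (x₀ ^ 2 / a ^ 2))) := by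
    rw [hD, mul_pow, mul_pow, mul_pow, mul_pow, mul_pow, h1, h2, h3]
  have key : (1 / ε - 1) * K * D ^ 2 = 1 := by
    rw [hK, hDsq]
    field_simp
    ring
  have hne : (1 / ε - 1) * K ≠ 0 := by
    intro h
    rw [h, zero_mul] at key
    exact zero_ne_one key
  intro Δ
  rw [hG, add_sub_cancel_left]
  constructor
  · intro h
    have h2' : (1 / ε - 1) * K * Δ ^ 2 = (1 / ε - 1) * K * D ^ 2 := by
      rw [key]; linarith
    have hsq : Δ ^ 2 = D ^ 2 := mul_left_cancel₀ hne h2'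
    rw [sq, sq, mul_self_eq_mul_self_iff] at hsq
    exact hsq
  · rintro (rfl | rfl)
    · linarith [key]
    · have : (-D) ^ 2 = D ^ 2 := by ring
      rw [this]
      linarith [key]
end

section
/- Recovery of the complex reflectivity: for any unitary matrices U_n, V_n ∈ ℂ^{M×M} whose first columns are u₀⁽ⁿ⁾ and v₀⁽ⁿ⁾ respectively, with Σ_n⁺ = (1/σ₀⁽ⁿ⁾) diag(1, 1/ε, …, 1/ε), the functional R_ε(y₀) = (1/N) Σ_{n=1}^{N} b_n(y₀)* V_n Σ_n⁺ U_n* a_n(y₀) satisfies R_ε(y₀) = e^{−iθ₀}/|ρ₀|, and hence 1/R_ε(y₀) = |ρ₀| e^{iθ₀} = ρ₀. -/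
open Real

/-- Recovery of the complex reflectivity: for unitary `U_n, V_n` whose first columns are
`u₀⁽ⁿ⁾` and `v₀⁽ⁿ⁾`, and `Σ_n⁺ = (1/σ₀⁽ⁿ⁾) diag(1, 1/ε, …, 1/ε)`, the functional
`R_ε(y₀) = (1/N) Σ_n b_n(y₀)* V_n Σ_n⁺ U_n* a_n(y₀)` satisfies `R_ε(y₀) = e^{−iθ₀}/|ρ₀|`,
hence `1/R_ε(y₀) = ρ₀`.  Indices are 0-based: `ω m = ω₁ + m Δω`. -/
theorem reflectivity_recovery
    (M N : ℕ) (hM : 1 ≤ M) (hN : 1 ≤ N)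
    (c ω₁ Δω θ₀ ε : ℝ) (hc : 0 < c) (hε : 0 < ε)
    (ω : ℕ → ℝ) (hω : ∀ m, ω m = ω₁ + m * Δω)
    (x : Fin N → EuclideanSpace ℝ (Fin 3)) (y₀ : EuclideanSpace ℝ (Fin 3))
    (hxy : ∀ n, x n ≠ y₀)
    (ρ₀ : ℂ) (hρ₀ : ρ₀ ≠ 0)
    (hρ : ρ₀ = (‖ρ₀‖ : ℂ) * Complex.exp (θ₀ * Complex.I))
    (u v a b : Fin N → Fin M → ℂ)
    (hu : ∀ n (m : Fin M), u n m = Complex.exp (Complex.I * (θ₀ / 2)) / (Real.sqrt M : ℂ)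
      * Complex.exp (Complex.I * (2 * ω m.val * ‖x n - y₀‖ / c)))
    (hv : ∀ n (m : Fin M), v n m = Complex.exp (-(Complex.I * (θ₀ / 2))) / (Real.sqrt M : ℂ)
      * Complex.exp (-(Complex.I * (2 * (m.val : ℝ) * Δω * ‖x n - y₀‖ / c))))
    (ha : ∀ n (m : Fin M), a n m =
      Complex.exp (Complex.I * (2 * ω m.val * ‖x n - y₀‖ / c)) / ((4 * π * ‖x n - y₀‖ : ℝ) : ℂ))
    (hb : ∀ n (m : Fin M), b n m =
      Complex.exp (-(Complex.I * (2 * (m.val : ℝ) * Δω * ‖x n - y₀‖ / c)))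
        / ((4 * π * ‖x n - y₀‖ : ℝ) : ℂ))
    (U V : Fin N → Matrix (Fin M) (Fin M) ℂ)
    (hU : ∀ n, U n ∈ Matrix.unitaryGroup (Fin M) ℂ)
    (hV : ∀ n, V n ∈ Matrix.unitaryGroup (Fin M) ℂ)
    (hUcol : ∀ n (m : Fin M), U n m ⟨0, by omega⟩ = u n m)
    (hVcol : ∀ n (m : Fin M), V n m ⟨0, by omega⟩ = v n m)
    (Sp : Fin N → Matrix (Fin M) (Fin M) ℂ)
    (hSp : ∀ n, Sp n = (((4 * π * ‖x n - y₀‖) ^ 2 / (M * ‖ρ₀‖) : ℝ) : ℂ)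
      • Matrix.diagonal (fun j : Fin M =>
          if j = (⟨0, by omega⟩ : Fin M) then 1 else ((ε⁻¹ : ℝ) : ℂ)))
    (R : ℂ)
    (hR : R = (1 / (N : ℂ)) * ∑ n : Fin N,
      dotProduct (fun m => (starRingEnd ℂ) (b n m))
        ((V n * Sp n * (U n).conjTranspose).mulVec (a n))) :
    R = Complex.exp (-(θ₀ * Complex.I)) / ((‖ρ₀‖ : ℝ) : ℂ) ∧ 1 / R = ρ₀ := by
  have hM0 : 0 < M := hM
  have key : ∀ n : Fin N,
      dotProduct (fun m => (starRingEnd ℂ) (b n m))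
        ((V n * Sp n * (U n).conjTranspose).mulVec (a n))
      = Complex.exp (-(θ₀ * Complex.I)) / ((‖ρ₀‖ : ℝ) : ℂ) := by
    intro n
    have hr : 0 < ‖x n - y₀‖ := norm_pos_iff.mpr (sub_ne_zero.mpr (hxy n))
    set r : ℝ := ‖x n - y₀‖ with hrdef
    have hπr : (4 * π * r : ℝ) ≠ 0 := by positivity
    have hπrC : ((4 * π * r : ℝ) : ℂ) ≠ 0 := by exact_mod_cast hπr
    have hsM : (0:ℝ) < Real.sqrt M := Real.sqrt_pos.mpr (by exact_mod_cast hM0)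
    have hsMC : ((Real.sqrt M : ℝ) : ℂ) ≠ 0 := by exact_mod_cast hsM.ne'
    have habs : (0:ℝ) < ‖ρ₀‖ := norm_pos_iff.mpr hρ₀
    have habsC : ((‖ρ₀‖ : ℝ) : ℂ) ≠ 0 := by exact_mod_cast habs.ne'
    have hMC : ((M:ℕ):ℂ) ≠ 0 := Nat.cast_ne_zero.mpr hM0.ne'
    set e0 : Fin M → ℂ := fun j => if j = (⟨0, hM⟩ : Fin M) then 1 else 0 with he0
    set s : ℂ := ((Real.sqrt M : ℝ) : ℂ) / ((4 * π * r : ℝ) : ℂ)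
        * Complex.exp (-(Complex.I * (θ₀ / 2))) with hs
    have h1 : Complex.exp (-(Complex.I * (θ₀ / 2))) * Complex.exp (Complex.I * (θ₀ / 2)) = 1 := by
      rw [← Complex.exp_add]; simp
    have hA : a n = s • u n := by
      funext m
      have h2 : s * (Complex.exp (Complex.I * (θ₀ / 2)) / ((Real.sqrt M : ℝ) : ℂ))
          = 1 / ((4 * π * r : ℝ) : ℂ) := by
        calc s * (Complex.exp (Complex.I * (θ₀ / 2)) / ((Real.sqrt M : ℝ) : ℂ))
            = (Complex.exp (-(Complex.I * (θ₀ / 2))) * Complex.exp (Complex.I * (θ₀ / 2)))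
              * (((Real.sqrt M : ℝ) : ℂ) / ((Real.sqrt M : ℝ) : ℂ)) / ((4 * π * r : ℝ) : ℂ) := by
              rw [hs]; ring
          _ = 1 / ((4 * π * r : ℝ) : ℂ) := by rw [h1, div_self hsMC]; ring
      rw [Pi.smul_apply, smul_eq_mul, hu, ← mul_assoc, h2, ha]
      ring
    have hUU : (U n).conjTranspose * U n = 1 := by
      have h := (hU n).1
      rwa [Matrix.star_eq_conjTranspose] at h
    have hB : (U n).conjTranspose.mulVec (u n) = e0 := by
      funext j
      have h3 : (U n).conjTranspose.mulVec (u n) j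
          = ((U n).conjTranspose * U n) j (⟨0, hM⟩ : Fin M) := by
        simp only [Matrix.mulVec, dotProduct, Matrix.mul_apply,
          Matrix.conjTranspose_apply]
        refine Finset.sum_congr rfl fun k _ => ?_
        rw [hUcol n k]
      rw [h3, hUU]
      simp [Matrix.one_apply, he0]
    have hC : (Sp n).mulVec e0
        = (((4 * π * r) ^ 2 / (M * ‖ρ₀‖) : ℝ) : ℂ) • e0 := by
      rw [hSp n]
      funext j
      simp only [Matrix.smul_mulVec, Pi.smul_apply, Matrix.mulVec_diagonal, smul_eq_mul]
      by_cases hj : j = (⟨0, hM⟩ : Fin M) <;> simp [he0, hj, hrdef]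
    have hD : (V n).mulVec e0 = v n := by
      funext m
      simp only [Matrix.mulVec, dotProduct, he0, mul_ite, mul_one, mul_zero]
      rw [Finset.sum_ite_eq' Finset.univ (⟨0, hM⟩ : Fin M) (fun k => V n m k)]
      simp [hVcol n m]
    have hmain : (V n * Sp n * (U n).conjTranspose).mulVec (a n)
        = (s * (((4 * π * r) ^ 2 / (M * ‖ρ₀‖) : ℝ) : ℂ)) • v n := by
      rw [← Matrix.mulVec_mulVec, ← Matrix.mulVec_mulVec, hA, Matrix.mulVec_smul, hB,
        Matrix.mulVec_smul, hC, smul_smul, Matrix.mulVec_smul, hD]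
    have hE : dotProduct (fun m => (starRingEnd ℂ) (b n m)) (v n)
        = (M : ℂ) * (Complex.exp (-(Complex.I * (θ₀ / 2)))
            / (((Real.sqrt M : ℝ) : ℂ) * ((4 * π * r : ℝ) : ℂ))) := by
      have hterm : ∀ m : Fin M, (starRingEnd ℂ) (b n m) * v n m
          = Complex.exp (-(Complex.I * (θ₀ / 2)))
            / (((Real.sqrt M : ℝ) : ℂ) * ((4 * π * r : ℝ) : ℂ)) := by
        intro m
        have hcast : 2 * ((m.val : ℝ) : ℂ) * (Δω : ℂ) * (r : ℂ) / (c : ℂ)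
            = ((2 * (m.val : ℝ) * Δω * r / c : ℝ) : ℂ) := by push_cast; ring
        rw [hb, hv, hcast]
        set t : ℝ := 2 * (m.val : ℝ) * Δω * r / c with ht
        have hconj : (starRingEnd ℂ) (Complex.exp (-(Complex.I * (t : ℂ))) / ((4 * π * r : ℝ) : ℂ))
            = Complex.exp (Complex.I * (t : ℂ)) / ((4 * π * r : ℝ) : ℂ) := by
          rw [map_div₀, ← Complex.exp_conj, Complex.conj_ofReal]
          simp
        rw [hconj]
        have hcanc : Complex.exp (Complex.I * (t : ℂ)) * Complex.exp (-(Complex.I * (t : ℂ))) = 1 := by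
          rw [← Complex.exp_add]; simp
        calc Complex.exp (Complex.I * (t : ℂ)) / ((4 * π * r : ℝ) : ℂ)
              * (Complex.exp (-(Complex.I * (θ₀ / 2))) / ((Real.sqrt M : ℝ) : ℂ)
                 * Complex.exp (-(Complex.I * (t : ℂ))))
            = (Complex.exp (Complex.I * (t : ℂ)) * Complex.exp (-(Complex.I * (t : ℂ))))
              * (Complex.exp (-(Complex.I * (θ₀ / 2)))
                / (((Real.sqrt M : ℝ) : ℂ) * ((4 * π * r : ℝ) : ℂ))) := by ring
          _ = _ := by rw [hcanc, one_mul]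
      calc ∑ m : Fin M, (starRingEnd ℂ) (b n m) * v n m
          = ∑ _m : Fin M, (Complex.exp (-(Complex.I * (θ₀ / 2)))
            / (((Real.sqrt M : ℝ) : ℂ) * ((4 * π * r : ℝ) : ℂ))) :=
            Finset.sum_congr rfl fun m _ => hterm m
        _ = _ := by simp [Finset.card_univ, mul_comm]
    rw [hmain, dotProduct_smul, smul_eq_mul, hE]
    have hexp : Complex.exp (-(Complex.I * (θ₀ / 2))) * Complex.exp (-(Complex.I * (θ₀ / 2)))
        = Complex.exp (-(θ₀ * Complex.I)) := by
      rw [← Complex.exp_add]; congr 1; ring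
    have hcastT : (((4 * π * r) ^ 2 / (M * ‖ρ₀‖) : ℝ) : ℂ)
        = ((4 * π * r : ℝ) : ℂ) ^ 2 / ((M : ℂ) * ((‖ρ₀‖ : ℝ) : ℂ)) := by
      push_cast; ring
    calc s * (((4 * π * r) ^ 2 / (M * ‖ρ₀‖) : ℝ) : ℂ)
          * ((M : ℂ) * (Complex.exp (-(Complex.I * (θ₀ / 2)))
              / (((Real.sqrt M : ℝ) : ℂ) * ((4 * π * r : ℝ) : ℂ))))
        = (Complex.exp (-(Complex.I * (θ₀ / 2))) * Complex.exp (-(Complex.I * (θ₀ / 2)))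
            / ((‖ρ₀‖ : ℝ) : ℂ))
          * ((((Real.sqrt M : ℝ) : ℂ) / ((Real.sqrt M : ℝ) : ℂ))
            * (((4 * π * r : ℝ) : ℂ) ^ 2 / ((4 * π * r : ℝ) : ℂ) ^ 2)
            * ((M : ℂ) / (M : ℂ))) := by
          rw [hs, hcastT]; ring
      _ = Complex.exp (-(θ₀ * Complex.I)) / ((‖ρ₀‖ : ℝ) : ℂ) := by
          rw [div_self hsMC, div_self (pow_ne_zero 2 hπrC), div_self hMC, hexp]
          ring
  have hNC : (N : ℂ) ≠ 0 := Nat.cast_ne_zero.mpr (by omega)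
  have hRval : R = Complex.exp (-(θ₀ * Complex.I)) / ((‖ρ₀‖ : ℝ) : ℂ) := by
    rw [hR, Finset.sum_congr rfl (fun n _ => key n), Finset.sum_const, Finset.card_univ,
      Fintype.card_fin, nsmul_eq_mul]
    field_simp
  refine ⟨hRval, ?_⟩
  rw [hRval, one_div_div, Complex.exp_neg, div_eq_mul_inv, inv_inv]
  exact hρ.symm
end

section
/- Statistical stability of the expected image: there exists a constant C > 0, depending only on α, ε, N and |ρ₀|, such that for every probability space and every random vector ν = (ν_1, …, ν_N) with E[ν_n] = 0 and E[ν_n²] < ∞ for all n, the image value G(ν) = |ρ₀| · [1 + α(1−ε)(1/N) Σ_{n=1}^{N} (T_n + ν_n)²]^{−1} satisfies |E[G(ν)] − |ρ₀| I₀| ≤ C Σ_{n=1}^{N} E[ν_n²], where I₀ = [1 + α(1−ε)(1/N) Σ_{n=1}^{N} T_n²]^{−1}. In particular, if E[ν_n²] ≤ σ² for all n, the expected image equals the unperturbed image |ρ₀| I₀ up to an error of order O(σ²). -/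
open MeasureTheory

/-- Algebraic second-order expansion of the inverse. -/
lemma aux_inv_expand (ρ s t : ℝ) (hs : 0 ≤ s) (ht : 0 ≤ t) :
    ρ * (1 + t)⁻¹ - ρ * (1 + s)⁻¹ + ρ * (t - s) / (1 + s) ^ 2
      = ρ * (t - s) ^ 2 / ((1 + t) * (1 + s) ^ 2) := by
  have h1 : (1 : ℝ) + t ≠ 0 := by positivity
  have h2 : (1 : ℝ) + s ≠ 0 := by positivity
  field_simp
  ring

set_option maxHeartbeats 2000000 in
/-- Statistical stability of the expected image: there is `C > 0`, depending only on
`α, ε, N, |ρ₀|`, such that for every probability space and every random vector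
`ν = (ν_1, …, ν_N)` with `E[ν_n] = 0` and `E[ν_n²] < ∞`, the image value
`G(ν) = |ρ₀| [1 + α(1−ε)(1/N) Σ_n (T_n + ν_n)²]⁻¹` satisfies
`|E[G(ν)] − |ρ₀| I₀| ≤ C Σ_n E[ν_n²]`, where `I₀ = [1 + α(1−ε)(1/N) Σ_n T_n²]⁻¹`. -/
theorem expected_image_stability
    (N : ℕ) (hN : 1 ≤ N) (α ε ρ : ℝ) (hα : 0 < α) (hε0 : 0 < ε) (hε1 : ε < 1)
    (hρ : 0 < ρ) (T : Fin N → ℝ) :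
    ∃ C : ℝ, 0 < C ∧
      ∀ (Ω : Type) (_ : MeasurableSpace Ω) (μ : Measure Ω),
        IsProbabilityMeasure μ →
        ∀ ν : Fin N → Ω → ℝ,
          (∀ n, Measurable (ν n)) →
          (∀ n, Integrable (ν n) μ) →
          (∀ n, ∫ x, ν n x ∂μ = 0) →
          (∀ n, Integrable (fun x => (ν n x) ^ 2) μ) →
          |(∫ x, ρ * (1 + α * (1 - ε) * ((1 : ℝ) / N) * ∑ n : Fin N, (T n + ν n x) ^ 2)⁻¹ ∂μ)
              - ρ * (1 + α * (1 - ε) * ((1 : ℝ) / N) * ∑ n : Fin N, (T n) ^ 2)⁻¹|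
            ≤ C * ∑ n : Fin N, ∫ x, (ν n x) ^ 2 ∂μ := by
  have hN' : (0 : ℝ) < N := by exact_mod_cast Nat.lt_of_lt_of_le Nat.zero_lt_one hN
  have h1ε : 0 < 1 - ε := by linarith
  set c : ℝ := α * (1 - ε) * ((1 : ℝ) / N) with hc_def
  have hc : 0 < c := by
    rw [hc_def]; exact mul_pos (mul_pos hα h1ε) (by positivity)
  set A : ℝ := ∑ n : Fin N, (T n) ^ 2 with hA_def
  have hA : 0 ≤ A := Finset.sum_nonneg fun _ _ => sq_nonneg _
  have hd : 0 < 1 + c * A := by nlinarith [mul_nonneg hc.le hA]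
  set K : ℝ := 12 * c ^ 2 * A + 4 * c with hK_def
  have hK : 0 < K := by nlinarith [sq_nonneg c, mul_nonneg (mul_nonneg (sq_nonneg c) hA) hc.le]
  clear_value c A K
  refine ⟨ρ * c + ρ * K + 1, by nlinarith [mul_pos hρ hc, mul_pos hρ hK], ?_⟩
  intro Ω mΩ μ hμ ν hmeas hint hmean hint2
  set G : Ω → ℝ := fun x => ρ * (1 + c * ∑ n : Fin N, (T n + ν n x) ^ 2)⁻¹ with hG_def
  set D : Ω → ℝ := fun x => c * ∑ n : Fin N, (2 * T n * ν n x + (ν n x) ^ 2) with hD_def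
  set Q : Ω → ℝ := fun x => ∑ n : Fin N, (ν n x) ^ 2 with hQ_def
  clear_value G D Q
  have ht0 : ∀ x, 0 ≤ ∑ n : Fin N, (T n + ν n x) ^ 2 :=
    fun x => Finset.sum_nonneg fun _ _ => sq_nonneg _
  have hQ0 : ∀ x, 0 ≤ Q x := fun x => by
    rw [hQ_def]; exact Finset.sum_nonneg fun _ _ => sq_nonneg _
  have hDS : ∀ x, c * ∑ n : Fin N, (T n + ν n x) ^ 2 - c * A = D x := by
    intro x
    simp only [hD_def, hA_def]
    rw [← mul_sub, ← Finset.sum_sub_distrib]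
    congr 1
    exact Finset.sum_congr rfl fun n _ => by ring
  -- integrabilities
  have hGmeas : Measurable G := by
    rw [hG_def]
    apply Measurable.const_mul
    exact (measurable_const.add ((Finset.measurable_sum _
      fun n _ => ((measurable_const.add (hmeas n)).pow_const 2)).const_mul c)).inv
  have hGbound : ∀ x, ‖G x‖ ≤ ρ := by
    intro x
    have h1 : 0 ≤ c * ∑ n : Fin N, (T n + ν n x) ^ 2 := mul_nonneg hc.le (ht0 x)
    have h2 : (1 + c * ∑ n : Fin N, (T n + ν n x) ^ 2)⁻¹ ≤ 1 :=
      inv_le_one_of_one_le₀ (by linarith)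
    have h3 : 0 ≤ (1 + c * ∑ n : Fin N, (T n + ν n x) ^ 2)⁻¹ :=
      inv_nonneg.mpr (by linarith)
    simp only [hG_def, Real.norm_eq_abs]
    rw [abs_of_nonneg (mul_nonneg hρ.le h3)]
    nlinarith
  have hGint : Integrable G μ :=
    Integrable.mono' (integrable_const ρ) hGmeas.aestronglyMeasurable (ae_of_all _ hGbound)
  have hDint' : ∀ n : Fin N, Integrable (fun x => 2 * T n * ν n x + (ν n x) ^ 2) μ :=
    fun n => ((hint n).const_mul _).add (hint2 n)
  have hDint : Integrable D μ := by
    rw [hD_def]; exact (integrable_finset_sum _ fun n _ => hDint' n).const_mul c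
  have hQint : Integrable Q μ := by
    rw [hQ_def]; exact integrable_finset_sum _ fun n _ => hint2 n
  have hDval : ∫ x, D x ∂μ = c * ∑ n : Fin N, ∫ x, (ν n x) ^ 2 ∂μ := by
    simp only [hD_def]
    rw [integral_const_mul]
    congr 1
    rw [integral_finset_sum _ fun n _ => hDint' n]
    refine Finset.sum_congr rfl fun n _ => ?_
    rw [integral_add ((hint n).const_mul _) (hint2 n), integral_const_mul, hmean n]
    ring
  have hQval : ∫ x, Q x ∂μ = ∑ n : Fin N, ∫ x, (ν n x) ^ 2 ∂μ := by
    simp only [hQ_def]; exact integral_finset_sum _ fun n _ => hint2 n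
  -- the remainder
  set R : Ω → ℝ := fun x => G x - ρ * (1 + c * A)⁻¹ + ρ * D x / (1 + c * A) ^ 2 with hR_def
  clear_value R
  have hRint : Integrable R μ := by
    rw [hR_def]
    exact (hGint.sub (integrable_const _)).add ((hDint.const_mul ρ).div_const _)
  have hRval : ∀ x, R x
      = ρ * (D x) ^ 2 / ((1 + c * ∑ n : Fin N, (T n + ν n x) ^ 2) * (1 + c * A) ^ 2) := by
    intro x
    have h := aux_inv_expand ρ (c * A) (c * ∑ n : Fin N, (T n + ν n x) ^ 2)
      (mul_nonneg hc.le hA) (mul_nonneg hc.le (ht0 x))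
    rw [hDS x] at h
    simp only [hR_def, hG_def]
    exact h
  have hR0 : ∀ x, 0 ≤ R x := by
    intro x
    rw [hRval x]
    have h1 : (0:ℝ) < 1 + c * ∑ n : Fin N, (T n + ν n x) ^ 2 := by
      nlinarith [mul_nonneg hc.le (ht0 x)]
    exact div_nonneg (mul_nonneg hρ.le (sq_nonneg _)) (mul_nonneg h1.le (sq_nonneg _))
  -- quadratic bound on D²
  have hD2 : ∀ x, (D x) ^ 2 ≤ K * Q x * (1 + c * ∑ n : Fin N, (T n + ν n x) ^ 2) := by
    intro x
    set L : ℝ := ∑ n : Fin N, T n * ν n x with hL_def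
    set t : ℝ := ∑ n : Fin N, (T n + ν n x) ^ 2 with ht_def
    clear_value L t
    have ht00 : 0 ≤ t := by rw [ht_def]; exact ht0 x
    have hL2 : L ^ 2 ≤ A * Q x := by
      simp only [hL_def, hA_def, hQ_def]
      exact Finset.sum_mul_sq_le_sq_mul_sq _ _ _
    have hDx : D x = c * (2 * L + Q x) := by
      simp only [hD_def, hL_def, hQ_def]
      congr 1
      rw [Finset.sum_add_distrib, Finset.mul_sum]
      congr 1
      exact Finset.sum_congr rfl fun n _ => by ring
    have hq : Q x ≤ 2 * t + 2 * A := by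
      simp only [hQ_def, ht_def, hA_def]
      rw [Finset.mul_sum, Finset.mul_sum, ← Finset.sum_add_distrib]
      exact Finset.sum_le_sum fun n _ => by nlinarith [sq_nonneg (2 * T n + ν n x)]
    have e1 : (D x) ^ 2 ≤ c ^ 2 * (8 * L ^ 2 + 2 * (Q x) ^ 2) := by
      rw [hDx]; nlinarith [sq_nonneg (2 * L - Q x)]
    have e3 : 2 * (Q x) ^ 2 ≤ 2 * Q x * (2 * t + 2 * A) := by
      nlinarith [hq, hQ0 x]
    have e23 : 8 * L ^ 2 + 2 * (Q x) ^ 2 ≤ 12 * A * Q x + 4 * Q x * t := by linarith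
    have e4 : (D x) ^ 2 ≤ c ^ 2 * (12 * A * Q x + 4 * Q x * t) :=
      e1.trans (mul_le_mul_of_nonneg_left e23 (sq_nonneg c))
    rw [hK_def]
    have n1 : 0 ≤ 12 * c ^ 3 * A * Q x * t :=
      mul_nonneg (mul_nonneg (mul_nonneg
        (mul_nonneg (by norm_num : (0:ℝ) ≤ 12) (pow_pos hc 3).le) hA) (hQ0 x)) ht00
    have n2 : 0 ≤ 4 * c * Q x :=
      mul_nonneg (mul_nonneg (by norm_num : (0:ℝ) ≤ 4) hc.le) (hQ0 x)
    linarith [e4, n1, n2]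
  have hRle : ∀ x, R x ≤ ρ * K * Q x := by
    intro x
    rw [hRval x]
    set t : ℝ := ∑ n : Fin N, (T n + ν n x) ^ 2 with ht_def
    clear_value t
    have ht00 : 0 ≤ t := by rw [ht_def]; exact ht0 x
    have hct : (0:ℝ) < 1 + c * t := by nlinarith [mul_nonneg hc.le ht00]
    have hden : (0:ℝ) < (1 + c * t) * (1 + c * A) ^ 2 := mul_pos hct (pow_pos hd 2)
    rw [div_le_iff₀ hden]
    have h1s : (1:ℝ) ≤ (1 + c * A) ^ 2 := by nlinarith [mul_nonneg hc.le hA]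
    have h2 := hD2 x
    rw [← ht_def] at h2
    have hnn : (0:ℝ) ≤ ρ * K * Q x * (1 + c * t) :=
      mul_nonneg (mul_nonneg (mul_nonneg hρ.le hK.le) (hQ0 x)) hct.le
    calc ρ * (D x) ^ 2 ≤ ρ * (K * Q x * (1 + c * t)) :=
          mul_le_mul_of_nonneg_left h2 hρ.le
      _ = ρ * K * Q x * (1 + c * t) := by ring
      _ ≤ ρ * K * Q x * (1 + c * t) * (1 + c * A) ^ 2 := le_mul_of_one_le_right hnn h1s
      _ = ρ * K * Q x * ((1 + c * t) * (1 + c * A) ^ 2) := by ring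
  -- putting it together
  set Sig : ℝ := ∑ n : Fin N, ∫ x, (ν n x) ^ 2 ∂μ with hSig_def
  clear_value Sig
  have hSig0 : 0 ≤ Sig := by
    rw [hSig_def]
    exact Finset.sum_nonneg fun n _ => integral_nonneg fun x => sq_nonneg _
  have hRIval : ∫ x, R x ∂μ
      = (∫ x, G x ∂μ) - ρ * (1 + c * A)⁻¹ + ρ / (1 + c * A) ^ 2 * (c * Sig) := by
    have i1 : Integrable (fun x => G x - ρ * (1 + c * A)⁻¹) μ :=
      hGint.sub (integrable_const _)
    have i2 : Integrable (fun x => (ρ / (1 + c * A) ^ 2) * D x) μ :=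
      hDint.const_mul _
    calc ∫ x, R x ∂μ
        = ∫ x, ((G x - ρ * (1 + c * A)⁻¹) + (ρ / (1 + c * A) ^ 2) * D x) ∂μ := by
          refine integral_congr_ae (ae_of_all _ fun x => ?_)
          simp only [hR_def]
          ring
      _ = (∫ x, (G x - ρ * (1 + c * A)⁻¹) ∂μ)
            + ∫ x, (ρ / (1 + c * A) ^ 2) * D x ∂μ := integral_add i1 i2
      _ = ((∫ x, G x ∂μ) - ∫ _x, ρ * (1 + c * A)⁻¹ ∂μ)
            + (ρ / (1 + c * A) ^ 2) * ∫ x, D x ∂μ := by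
          rw [integral_sub hGint (integrable_const _), integral_const_mul, integral_const_mul]
      _ = (∫ x, G x ∂μ) - ρ * (1 + c * A)⁻¹ + ρ / (1 + c * A) ^ 2 * (c * Sig) := by
          rw [integral_const, hDval, hSig_def]
          simp [measure_univ]
  have hRI1 : ∫ x, R x ∂μ ≤ ρ * K * Sig := by
    calc ∫ x, R x ∂μ ≤ ∫ x, (ρ * K) * Q x ∂μ :=
          integral_mono hRint (hQint.const_mul _) hRle
      _ = ρ * K * Sig := by rw [integral_const_mul, hQval, hSig_def]
  have hRI0 : 0 ≤ ∫ x, R x ∂μ := integral_nonneg hR0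
  have hterm0 : 0 ≤ ρ / (1 + c * A) ^ 2 * (c * Sig) :=
    mul_nonneg (div_nonneg hρ.le (sq_nonneg _)) (mul_nonneg hc.le hSig0)
  have hterm1 : ρ / (1 + c * A) ^ 2 * (c * Sig) ≤ ρ * c * Sig := by
    have h1s : (1:ℝ) ≤ (1 + c * A) ^ 2 := by nlinarith [mul_nonneg hc.le hA]
    have hinv : ρ / (1 + c * A) ^ 2 ≤ ρ := by
      rw [div_le_iff₀ (pow_pos hd 2)]
      nlinarith [mul_le_mul_of_nonneg_left h1s hρ.le]
    have := mul_le_mul_of_nonneg_right hinv (mul_nonneg hc.le hSig0)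
    nlinarith
  have hgoal : (∫ x, G x ∂μ) - ρ * (1 + c * A)⁻¹
      = (∫ x, R x ∂μ) - ρ / (1 + c * A) ^ 2 * (c * Sig) := by
    rw [hRIval]; ring
  rw [hgoal, abs_le]
  constructor
  · nlinarith [mul_nonneg (mul_nonneg hρ.le hc.le) hSig0]
  · nlinarith [mul_nonneg (mul_nonneg hρ.le hK.le) hSig0]
end

section
/- Statistical stability of the second moment of the image: there exists a constant C > 0, depending only on α, ε, N and |ρ₀|, such that for every probability space and every random vector ν = (ν_1, …, ν_N) with E[ν_n] = 0 and E[ν_n²] < ∞ for all n, the image value G(ν) = |ρ₀| · [1 + α(1−ε)(1/N) Σ_{n=1}^{N} (T_n + ν_n)²]^{−1} satisfies |E[G(ν)²] − |ρ₀|² I₀²| ≤ C Σ_{n=1}^{N} E[ν_n²], where I₀ = [1 + α(1−ε)(1/N) Σ_{n=1}^{N} T_n²]^{−1}. -/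
set_option maxHeartbeats 1000000

lemma aux_f3 (c B S S₀ u u₀ : ℝ) (hu : 1 ≤ u) (hu₀ : 1 ≤ u₀)
    (hcS : c*S = u - 1) (hcS₀ : c*S₀ = u₀ - 1)
    (hcB' : c*B ≤ 2*(c*S₀) + 2*(c*S)) : c*B ≤ 4*(u₀*u) := by
  have hx : (0:ℝ) ≤ (u₀-1)*(u-1) := mul_nonneg (by linarith) (by linarith)
  nlinarith [hx]

lemma aux_f2 (c B a u u₀ : ℝ) (hc : 0 < c) (hB : 0 ≤ B) (ha : 0 ≤ a)
    (hu : 1 ≤ u) (hu₀ : 1 ≤ u₀) (f1 : c*a^2 ≤ u₀*B) (f3 : c*B ≤ 4*(u₀*u)) :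
    c*a ≤ 2*(u₀*u) := by
  have h0u₀ : (0:ℝ) ≤ u₀ := by linarith
  have h2 : (c*a)^2 ≤ (2*(u₀*u))^2 := by
    have s1 : c*(c*a^2) ≤ c*(u₀*B) := mul_le_mul_of_nonneg_left f1 hc.le
    have s2 : u₀*(c*B) ≤ u₀*(4*(u₀*u)) := mul_le_mul_of_nonneg_left f3 h0u₀
    have s3 : (0:ℝ) ≤ u₀^2*u*(u-1) :=
      mul_nonneg (mul_nonneg (sq_nonneg u₀) (by linarith)) (by linarith)
    nlinarith [s1, s2, s3]
  nlinarith [h2, mul_nonneg hc.le ha, mul_pos (show (0:ℝ) < u₀ by linarith) (show (0:ℝ) < u by linarith)]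

lemma aux_poly (c B a u u₀ : ℝ) (hc : 0 < c) (hB : 0 ≤ B) (ha : 0 ≤ a)
    (hu : 1 ≤ u) (hu₀ : 1 ≤ u₀)
    (f1 : c*a^2 ≤ u₀*B) (f2 : c*a ≤ 2*(u₀*u)) (f3 : c*B ≤ 4*(u₀*u)) :
    2*c*u₀^2*B + c^2*u₀*((2*a+B)*(6*a+B)) + 4*c^3*a*(2*a+B)^2 ≤ 162*c*B*(u^2*u₀^3) := by
  have h0u₀ : (0:ℝ) ≤ u₀ := by linarith
  have h0u : (0:ℝ) ≤ u := by linarith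
  have hcB0 : (0:ℝ) ≤ c*B := mul_nonneg hc.le hB
  have q00 : (1:ℝ) ≤ u^2 := by nlinarith
  have q0 : (1:ℝ) ≤ u^2*u₀ := by nlinarith [q00]
  have q0b : (1:ℝ) ≤ u*u₀ := by nlinarith
  have q1 : u₀^2 ≤ u^2*u₀^3 := by nlinarith [q0, sq_nonneg u₀]
  have q2 : u*u₀^2 ≤ u^2*u₀^3 := by
    nlinarith [mul_nonneg (mul_nonneg h0u (sq_nonneg u₀)) (show (0:ℝ) ≤ u*u₀ - 1 by linarith)]
  have q3 : u^2*u₀^2 ≤ u^2*u₀^3 := by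
    nlinarith [mul_nonneg (mul_nonneg (sq_nonneg u) (sq_nonneg u₀)) (show (0:ℝ) ≤ u₀ - 1 by linarith)]
  have m1 : 2*c*u₀^2*B ≤ 2*(c*B*(u^2*u₀^3)) := by
    nlinarith [mul_le_mul_of_nonneg_left q1 hcB0]
  have m2 : 12*(c^2*u₀*a^2) ≤ 12*(c*B*(u^2*u₀^3)) := by
    nlinarith [mul_le_mul_of_nonneg_left f1 (mul_nonneg hc.le h0u₀),
      mul_le_mul_of_nonneg_left q1 hcB0]
  have m3 : 8*(c^2*u₀*a*B) ≤ 16*(c*B*(u^2*u₀^3)) := by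
    nlinarith [mul_le_mul_of_nonneg_left f2 (mul_nonneg (mul_nonneg hc.le h0u₀) hB),
      mul_le_mul_of_nonneg_left q2 hcB0]
  have m4 : c^2*u₀*B^2 ≤ 4*(c*B*(u^2*u₀^3)) := by
    nlinarith [mul_le_mul_of_nonneg_left f3 (mul_nonneg (mul_nonneg hc.le h0u₀) hB),
      mul_le_mul_of_nonneg_left q2 hcB0]
  have m5 : 16*(c^3*a^3) ≤ 32*(c*B*(u^2*u₀^3)) := by
    nlinarith [mul_le_mul_of_nonneg_left
        (mul_le_mul f1 f2 (mul_nonneg hc.le ha) (mul_nonneg h0u₀ hB)) hc.le,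
      mul_le_mul_of_nonneg_left q2 hcB0]
  have m6 : 16*(c^3*a^2*B) ≤ 64*(c*B*(u^2*u₀^3)) := by
    nlinarith [mul_le_mul_of_nonneg_left
        (mul_le_mul f1 f3 hcB0 (mul_nonneg h0u₀ hB)) hc.le,
      mul_le_mul_of_nonneg_left q2 hcB0]
  have m7 : 4*(c^3*a*B^2) ≤ 32*(c*B*(u^2*u₀^3)) := by
    nlinarith [mul_le_mul_of_nonneg_left
        (mul_le_mul f2 f3 hcB0 (by positivity : (0:ℝ) ≤ 2*(u₀*u))) hcB0,
      mul_le_mul_of_nonneg_left q3 hcB0]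
  nlinarith [m1, m2, m3, m4, m5, m6, m7]

lemma core_stab (c S₀ S B A : ℝ) (hc : 0 < c) (hS₀ : 0 ≤ S₀) (hS : 0 ≤ S) (hB : 0 ≤ B)
    (hSd : S = S₀ + 2*A + B) (hCS : A^2 ≤ S₀*B) (hBle : B ≤ 2*S₀ + 2*S) :
    |((1+c*S)⁻¹)^2 - ((1+c*S₀)⁻¹)^2 + 4*c*A/(1+c*S₀)^3| ≤ (162*c) * B := by
  set u : ℝ := 1 + c*S with hu_def
  set u₀ : ℝ := 1 + c*S₀ with hu₀_def
  have hu : (1:ℝ) ≤ u := by rw [hu_def]; nlinarith [mul_nonneg hc.le hS]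
  have hu₀ : (1:ℝ) ≤ u₀ := by rw [hu₀_def]; nlinarith [mul_nonneg hc.le hS₀]
  have hu' : (0:ℝ) < u := by linarith
  have hu₀' : (0:ℝ) < u₀ := by linarith
  have hune : u ≠ 0 := hu'.ne'
  have hu₀ne : u₀ ≠ 0 := hu₀'.ne'
  have hEq : (u⁻¹)^2 - (u₀⁻¹)^2 + 4*c*A/u₀^3
      = (u₀^3 - u^2*u₀ + 4*c*A*u^2) / (u^2*u₀^3) := by
    field_simp
  have hP : u₀^3 - u^2*u₀ + 4*c*A*u^2
      = -(2*c*u₀^2*B) + c^2*u₀*((2*A+B)*(6*A-B)) + 4*c^3*A*(2*A+B)^2 := by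
    rw [hu_def, hu₀_def, hSd]; ring
  have hcB' : c*B ≤ 2*(c*S₀) + 2*(c*S) := by nlinarith [mul_le_mul_of_nonneg_left hBle hc.le]
  have hcS : c*S = u - 1 := by rw [hu_def]; ring
  have hcS₀ : c*S₀ = u₀ - 1 := by rw [hu₀_def]; ring
  have f1 : c*(|A|)^2 ≤ u₀*B := by
    rw [sq_abs]
    have h1 : c*A^2 ≤ c*(S₀*B) := mul_le_mul_of_nonneg_left hCS hc.le
    have h2 : c*(S₀*B) = (c*S₀)*B := by ring
    rw [h2, hcS₀] at h1
    nlinarith [h1, hB]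
  clear_value u u₀
  have f3 : c*B ≤ 4*(u₀*u) := aux_f3 c B S S₀ u u₀ hu hu₀ hcS hcS₀ hcB'
  have f2 : c*(|A|) ≤ 2*(u₀*u) :=
    aux_f2 c B (|A|) u u₀ hc hB (abs_nonneg A) hu hu₀ f1 f3
  have hpoly := aux_poly c B (|A|) u u₀ hc hB (abs_nonneg A) hu hu₀ f1 f2 f3
  have ha : (0:ℝ) ≤ (|A|) := abs_nonneg A
  have hA1 : A ≤ (|A|) := le_abs_self A
  have hA2 : -(|A|) ≤ A := neg_abs_le A
  have e1 : |2*A+B| ≤ 2*(|A|)+B := abs_le.2 ⟨by linarith, by linarith⟩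
  have e2 : |6*A-B| ≤ 6*(|A|)+B := abs_le.2 ⟨by linarith, by linarith⟩
  have habs : |u₀^3 - u^2*u₀ + 4*c*A*u^2|
      ≤ 2*c*u₀^2*B + c^2*u₀*((2*(|A|)+B)*(6*(|A|)+B)) + 4*c^3*(|A|)*(2*(|A|)+B)^2 := by
    rw [hP]
    refine (abs_add_three _ _ _).trans ?_
    have t1 : |-(2*c*u₀^2*B)| = 2*c*u₀^2*B := by
      rw [abs_neg, abs_of_nonneg (by positivity)]
    have t2 : |c^2*u₀*((2*A+B)*(6*A-B))| ≤ c^2*u₀*((2*(|A|)+B)*(6*(|A|)+B)) := by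
      rw [abs_mul, abs_mul, abs_mul, abs_of_nonneg (sq_nonneg c), abs_of_nonneg hu₀'.le]
      refine mul_le_mul_of_nonneg_left ?_ (by positivity)
      exact mul_le_mul e1 e2 (abs_nonneg _) (by linarith)
    have t3 : |4*c^3*A*(2*A+B)^2| ≤ 4*c^3*(|A|)*(2*(|A|)+B)^2 := by
      rw [abs_mul, abs_mul, abs_of_nonneg (show (0:ℝ) ≤ 4*c^3 by positivity),
        abs_of_nonneg (sq_nonneg (2*A+B))]
      have hsq : (2*A+B)^2 ≤ (2*(|A|)+B)^2 := sq_le_sq' (by linarith) (by linarith)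
      have h4 : (0:ℝ) ≤ 4*c^3*(|A|) := by positivity
      nlinarith [mul_le_mul_of_nonneg_left hsq h4]
    linarith
  rw [hEq, abs_div, abs_of_pos (show (0:ℝ) < u^2*u₀^3 by positivity),
    div_le_iff₀ (show (0:ℝ) < u^2*u₀^3 by positivity)]
  calc |u₀^3 - u^2*u₀ + 4*c*A*u^2|
      ≤ 2*c*u₀^2*B + c^2*u₀*((2*(|A|)+B)*(6*(|A|)+B)) + 4*c^3*(|A|)*(2*(|A|)+B)^2 := habs
    _ ≤ 162*c*B*(u^2*u₀^3) := hpoly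
    _ = 162*c*B*(u^2*u₀^3) := rfl


open MeasureTheory

/-- Statistical stability of the second moment of the image: there is `C > 0`, depending
only on `α, ε, N, |ρ₀|`, such that for every probability space and every random vector
`ν = (ν_1, …, ν_N)` with `E[ν_n] = 0` and `E[ν_n²] < ∞`, the image value
`G(ν) = |ρ₀| [1 + α(1−ε)(1/N) Σ_n (T_n + ν_n)²]⁻¹` satisfies
`|E[G(ν)²] − |ρ₀|² I₀²| ≤ C Σ_n E[ν_n²]`, where `I₀ = [1 + α(1−ε)(1/N) Σ_n T_n²]⁻¹`. -/
theorem second_moment_image_stability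
    (N : ℕ) (hN : 1 ≤ N) (α ε ρ : ℝ) (hα : 0 < α) (hε0 : 0 < ε) (hε1 : ε < 1)
    (hρ : 0 < ρ) (T : Fin N → ℝ) :
    ∃ C : ℝ, 0 < C ∧
      ∀ (Ω : Type) (_ : MeasurableSpace Ω) (μ : Measure Ω),
        IsProbabilityMeasure μ →
        ∀ ν : Fin N → Ω → ℝ,
          (∀ n, Measurable (ν n)) →
          (∀ n, Integrable (ν n) μ) →
          (∀ n, ∫ x, ν n x ∂μ = 0) →
          (∀ n, Integrable (fun x => (ν n x) ^ 2) μ) →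
          |(∫ x, (ρ * (1 + α * (1 - ε) * ((1 : ℝ) / N)
                * ∑ n : Fin N, (T n + ν n x) ^ 2)⁻¹) ^ 2 ∂μ)
              - ρ ^ 2 * ((1 + α * (1 - ε) * ((1 : ℝ) / N) * ∑ n : Fin N, (T n) ^ 2)⁻¹) ^ 2|
            ≤ C * ∑ n : Fin N, ∫ x, (ν n x) ^ 2 ∂μ := by
  have hN0 : (0:ℝ) < N := by
    have : 0 < N := hN
    exact_mod_cast this
  set c : ℝ := α * (1 - ε) * ((1 : ℝ) / N) with hc_def
  have hc : 0 < c := by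
    rw [hc_def]
    have h1 : (0:ℝ) < 1 - ε := by linarith
    positivity
  set S₀ : ℝ := ∑ n : Fin N, (T n)^2 with hS₀_def
  have hS₀ : 0 ≤ S₀ := by
    rw [hS₀_def]; exact Finset.sum_nonneg fun n _ => sq_nonneg _
  set u₀ : ℝ := 1 + c * S₀ with hu₀_def
  have hu₀' : (0:ℝ) < u₀ := by rw [hu₀_def]; nlinarith [mul_nonneg hc.le hS₀]
  refine ⟨162 * ρ^2 * c, by positivity, ?_⟩
  intro Ω inst μ hμ ν hmeas hint h0 h2
  -- pointwise estimate
  have hpt : ∀ x, |(ρ * (1 + c * ∑ n : Fin N, (T n + ν n x) ^ 2)⁻¹) ^ 2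
        - ρ^2 * (u₀⁻¹)^2 + (4*ρ^2*c/u₀^3) * (∑ n : Fin N, T n * ν n x)|
      ≤ 162*ρ^2*c * ∑ n : Fin N, (ν n x)^2 := by
    intro x
    have hS : 0 ≤ ∑ n : Fin N, (T n + ν n x)^2 :=
      Finset.sum_nonneg fun n _ => sq_nonneg _
    have hB : 0 ≤ ∑ n : Fin N, (ν n x)^2 :=
      Finset.sum_nonneg fun n _ => sq_nonneg _
    have hSd : (∑ n : Fin N, (T n + ν n x)^2)
        = S₀ + 2*(∑ n : Fin N, T n * ν n x) + ∑ n : Fin N, (ν n x)^2 := by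
      rw [hS₀_def, Finset.mul_sum, ← Finset.sum_add_distrib, ← Finset.sum_add_distrib]
      exact Finset.sum_congr rfl fun n _ => by ring
    have hCS : (∑ n : Fin N, T n * ν n x)^2 ≤ S₀ * ∑ n : Fin N, (ν n x)^2 := by
      rw [hS₀_def]; exact Finset.sum_mul_sq_le_sq_mul_sq _ _ _
    have hBle : (∑ n : Fin N, (ν n x)^2) ≤ 2*S₀ + 2*∑ n : Fin N, (T n + ν n x)^2 := by
      calc (∑ n : Fin N, (ν n x)^2)
          ≤ ∑ n : Fin N, (2*(T n)^2 + 2*(T n + ν n x)^2) :=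
            Finset.sum_le_sum fun n _ => by nlinarith [sq_nonneg (2*T n + ν n x)]
        _ = 2*S₀ + 2*∑ n : Fin N, (T n + ν n x)^2 := by
            rw [hS₀_def, Finset.sum_add_distrib, ← Finset.mul_sum, ← Finset.mul_sum]
    have hcore := core_stab c S₀ _ _ _ hc hS₀ hS hB hSd hCS hBle
    rw [← hu₀_def] at hcore
    have key : (ρ * (1 + c * ∑ n : Fin N, (T n + ν n x) ^ 2)⁻¹) ^ 2
          - ρ^2 * (u₀⁻¹)^2 + (4*ρ^2*c/u₀^3) * (∑ n : Fin N, T n * ν n x)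
        = ρ^2 * (((1 + c * ∑ n : Fin N, (T n + ν n x) ^ 2)⁻¹)^2 - (u₀⁻¹)^2
            + 4*c*(∑ n : Fin N, T n * ν n x)/u₀^3) := by ring
    rw [key, abs_mul, abs_of_nonneg (sq_nonneg ρ)]
    exact (mul_le_mul_of_nonneg_left hcore (sq_nonneg ρ)).trans (le_of_eq (by ring))
  -- integrability
  have hSum_meas : Measurable fun x => ∑ n : Fin N, (T n + ν n x)^2 :=
    Finset.measurable_sum _ fun n _ => (measurable_const.add (hmeas n)).pow_const 2
  have hGmeas : Measurable fun x =>
      (ρ * (1 + c * ∑ n : Fin N, (T n + ν n x) ^ 2)⁻¹) ^ 2 :=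
    (measurable_const.mul ((measurable_const.add (measurable_const.mul hSum_meas)).inv)).pow_const 2
  have hGb : ∀ x, ‖(ρ * (1 + c * ∑ n : Fin N, (T n + ν n x) ^ 2)⁻¹) ^ 2‖ ≤ ρ^2 := by
    intro x
    rw [Real.norm_eq_abs, abs_of_nonneg (sq_nonneg _)]
    have hs0 : 0 ≤ ∑ n : Fin N, (T n + ν n x)^2 :=
      Finset.sum_nonneg fun n _ => sq_nonneg _
    have h1 : (1:ℝ) ≤ 1 + c * ∑ n : Fin N, (T n + ν n x)^2 := by
      nlinarith [mul_nonneg hc.le hs0]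
    have ht0 : (0:ℝ) ≤ (1 + c * ∑ n : Fin N, (T n + ν n x)^2)⁻¹ :=
      inv_nonneg.2 (by linarith)
    have ht1 : (1 + c * ∑ n : Fin N, (T n + ν n x)^2)⁻¹ ≤ 1 :=
      inv_le_one_of_one_le₀ h1
    nlinarith [sq_nonneg ρ, mul_nonneg (mul_nonneg (sq_nonneg ρ)
      (by linarith : (0:ℝ) ≤ 1 - (1 + c * ∑ n : Fin N, (T n + ν n x)^2)⁻¹))
      (by linarith : (0:ℝ) ≤ 1 + (1 + c * ∑ n : Fin N, (T n + ν n x)^2)⁻¹)]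
  have hGint : Integrable (fun x =>
      (ρ * (1 + c * ∑ n : Fin N, (T n + ν n x) ^ 2)⁻¹) ^ 2) μ :=
    Integrable.mono' (integrable_const (ρ^2)) hGmeas.aestronglyMeasurable (ae_of_all _ hGb)
  have hAint : Integrable (fun x => ∑ n : Fin N, T n * ν n x) μ :=
    integrable_finset_sum _ fun n _ => (hint n).const_mul (T n)
  have hBint : Integrable (fun x => ∑ n : Fin N, (ν n x)^2) μ :=
    integrable_finset_sum _ fun n _ => h2 n
  have hAzero : ∫ x, (∑ n : Fin N, T n * ν n x) ∂μ = 0 := by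
    rw [integral_finset_sum _ fun n _ => (hint n).const_mul (T n)]
    simp [integral_const_mul, h0]
  have haux1 : Integrable (fun x =>
      (ρ * (1 + c * ∑ n : Fin N, (T n + ν n x) ^ 2)⁻¹) ^ 2 - ρ^2 * (u₀⁻¹)^2) μ :=
    hGint.sub (integrable_const _)
  have haux2 : Integrable (fun x =>
      (4*ρ^2*c/u₀^3) * (∑ n : Fin N, T n * ν n x)) μ := hAint.const_mul _
  have hHint : Integrable (fun x =>
      (ρ * (1 + c * ∑ n : Fin N, (T n + ν n x) ^ 2)⁻¹) ^ 2
        - ρ^2 * (u₀⁻¹)^2 + (4*ρ^2*c/u₀^3) * (∑ n : Fin N, T n * ν n x)) μ :=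
    haux1.add haux2
  have hHmean : ∫ x, ((ρ * (1 + c * ∑ n : Fin N, (T n + ν n x) ^ 2)⁻¹) ^ 2
        - ρ^2 * (u₀⁻¹)^2 + (4*ρ^2*c/u₀^3) * (∑ n : Fin N, T n * ν n x)) ∂μ
      = (∫ x, (ρ * (1 + c * ∑ n : Fin N, (T n + ν n x) ^ 2)⁻¹) ^ 2 ∂μ)
        - ρ^2 * (u₀⁻¹)^2 := by
    rw [integral_add haux1 haux2,
      integral_sub hGint (integrable_const _), integral_const, integral_const_mul, hAzero]
    simp [measure_univ]
  calc |(∫ x, (ρ * (1 + c * ∑ n : Fin N, (T n + ν n x) ^ 2)⁻¹) ^ 2 ∂μ)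
        - ρ^2 * (u₀⁻¹)^2|
      = |∫ x, ((ρ * (1 + c * ∑ n : Fin N, (T n + ν n x) ^ 2)⁻¹) ^ 2
          - ρ^2 * (u₀⁻¹)^2 + (4*ρ^2*c/u₀^3) * (∑ n : Fin N, T n * ν n x)) ∂μ| := by
        rw [hHmean]
    _ ≤ ∫ x, |(ρ * (1 + c * ∑ n : Fin N, (T n + ν n x) ^ 2)⁻¹) ^ 2
          - ρ^2 * (u₀⁻¹)^2 + (4*ρ^2*c/u₀^3) * (∑ n : Fin N, T n * ν n x)| ∂μ := by
        exact norm_integral_le_integral_norm (μ := μ)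
          (f := fun x => (ρ * (1 + c * ∑ n : Fin N, (T n + ν n x) ^ 2)⁻¹) ^ 2
            - ρ^2 * (u₀⁻¹)^2 + (4*ρ^2*c/u₀^3) * (∑ n : Fin N, T n * ν n x))
    _ ≤ ∫ x, 162*ρ^2*c * ∑ n : Fin N, (ν n x)^2 ∂μ :=
        integral_mono hHint.abs (hBint.const_mul _) hpt
    _ = 162*ρ^2*c * ∑ n : Fin N, ∫ x, (ν n x)^2 ∂μ := by
        rw [integral_const_mul, integral_finset_sum _ fun n _ => h2 n]
    _ = 162 * ρ^2 * c * ∑ n : Fin N, ∫ x, (ν n x)^2 ∂μ := by ring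
end

section
/- Statistical stability of the variance of the image: there exists a constant C > 0, depending only on α, ε, N and |ρ₀|, such that for every probability space and every random vector ν = (ν_1, …, ν_N) with E[ν_n] = 0 and E[ν_n²] < ∞ for all n, the image value G(ν) = |ρ₀| · [1 + α(1−ε)(1/N) Σ_{n=1}^{N} (T_n + ν_n)²]^{−1} satisfies Var[G(ν)] = E[G(ν)²] − (E[G(ν)])² ≤ C Σ_{n=1}^{N} E[ν_n²]. In particular, if E[ν_n²] ≤ σ² for all n, then Var[G(ν)] = O(σ²), so the image is statistically stable when σ²/ε is small. -/
open MeasureTheory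

private lemma aux_sqrt (c x : ℝ) (hc : 0 < c) :
    c * |x| ≤ Real.sqrt c / 2 * (1 + c * x ^ 2) := by
  have h := Real.sq_sqrt hc.le
  have hs := Real.sqrt_pos.mpr hc
  have hx : c * x ^ 2 = (Real.sqrt c * |x|) ^ 2 := by rw [mul_pow, h, sq_abs]
  have hcx : Real.sqrt c * (Real.sqrt c * |x|) = c * |x| := by rw [← mul_assoc, ← sq, h]
  nlinarith [mul_nonneg hs.le (sq_nonneg (1 - Real.sqrt c * |x|)), hx, hcx]

private lemma term_bound (c T v A B : ℝ) (hc : 0 < c)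
    (hA : 1 + c * (T + v) ^ 2 ≤ A) (hB : 1 ≤ B) :
    c * |2 * T * v + v ^ 2| / (A * B) ≤ (3 * c * |T| + Real.sqrt c / 2) * |v| := by
  have hA1 : 1 ≤ A := le_trans (by nlinarith [sq_nonneg (T + v)]) hA
  have hA0 : (0:ℝ) < A := by linarith
  have hB0 : (0:ℝ) < B := by linarith
  have hAB : (0:ℝ) < A * B := mul_pos hA0 hB0
  have hABone : (1:ℝ) ≤ A * B := by nlinarith
  rw [div_le_iff₀ hAB]
  have habs : |2 * T * v + v ^ 2| ≤ 2 * |T| * |v| + |v| * |v| := by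
    have h1 : |2 * T * v + v ^ 2| ≤ |2 * T * v| + |v ^ 2| := abs_add_le _ _
    have h2 : |2 * T * v| = 2 * |T| * |v| := by rw [abs_mul, abs_mul, abs_two]
    have h3 : |v ^ 2| = |v| * |v| := by rw [abs_pow, pow_two]
    linarith
  have ha : c * |T + v| ≤ Real.sqrt c / 2 * A :=
    le_trans (aux_sqrt c (T + v) hc)
      (mul_le_mul_of_nonneg_left hA (by positivity))
  have hv : |v| ≤ |T + v| + |T| := by
    have := abs_add_le (T + v) (-T)
    simpa using this
  have h1 : c * |v| ≤ (Real.sqrt c / 2 + c * |T|) * A := by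
    have h4 : c * |v| ≤ c * |T + v| + c * |T| := by nlinarith
    have h5 : c * |T| ≤ c * |T| * A := by
      nlinarith [mul_nonneg hc.le (abs_nonneg T)]
    nlinarith
  calc c * |2 * T * v + v ^ 2| ≤ c * (2 * |T| * |v| + |v| * |v|) :=
        mul_le_mul_of_nonneg_left habs hc.le
  _ = 2 * c * |T| * |v| + (c * |v|) * |v| := by ring
  _ ≤ 2 * c * |T| * |v| * (A * B) + ((Real.sqrt c / 2 + c * |T|) * A) * |v| * B := by
      have t1 : 2 * c * |T| * |v| ≤ 2 * c * |T| * |v| * (A * B) := by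
        nlinarith [mul_nonneg (mul_nonneg (mul_nonneg (by linarith : (0:ℝ) ≤ 2 * c)
          (abs_nonneg T)) (abs_nonneg v)) (sub_nonneg.mpr hABone)]
      have t2 : (c * |v|) * |v| ≤ ((Real.sqrt c / 2 + c * |T|) * A) * |v| := by
        exact mul_le_mul_of_nonneg_right h1 (abs_nonneg v)
      have t3 : ((Real.sqrt c / 2 + c * |T|) * A) * |v|
          ≤ ((Real.sqrt c / 2 + c * |T|) * A) * |v| * B := by
        have hnn : (0:ℝ) ≤ ((Real.sqrt c / 2 + c * |T|) * A) * |v| := by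
          have : (0:ℝ) ≤ Real.sqrt c / 2 + c * |T| := by positivity
          positivity
        nlinarith [mul_nonneg hnn (sub_nonneg.mpr hB)]
      linarith
  _ = (3 * c * |T| + Real.sqrt c / 2) * |v| * (A * B) := by ring

private lemma inv_diff_bound (N : ℕ) (c : ℝ) (hc : 0 < c) (T v : Fin N → ℝ) :
    |(1 + c * ∑ n, (T n + v n) ^ 2)⁻¹ - (1 + c * ∑ n, (T n) ^ 2)⁻¹|
      ≤ ∑ n, (3 * c * |T n| + Real.sqrt c / 2) * |v n| := by
  set A := 1 + c * ∑ n, (T n + v n) ^ 2 with hAdef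
  set B := 1 + c * ∑ n, (T n) ^ 2 with hBdef
  have hSA : 0 ≤ ∑ n, (T n + v n) ^ 2 := Finset.sum_nonneg fun n _ => sq_nonneg _
  have hSB : 0 ≤ ∑ n : Fin N, (T n) ^ 2 := Finset.sum_nonneg fun n _ => sq_nonneg _
  have hA1 : 1 ≤ A := by rw [hAdef]; nlinarith
  have hB1 : 1 ≤ B := by rw [hBdef]; nlinarith
  have hA0 : (0:ℝ) < A := by linarith
  have hB0 : (0:ℝ) < B := by linarith
  have key : A⁻¹ - B⁻¹ = (B - A) / (A * B) := by
    field_simp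
  rw [key, abs_div, abs_of_pos (mul_pos hA0 hB0)]
  have hBA : B - A = c * ((∑ n : Fin N, (T n) ^ 2) - ∑ n, (T n + v n) ^ 2) := by
    rw [hAdef, hBdef]; ring
  have h2 : |B - A| ≤ ∑ n, c * |2 * T n * v n + (v n) ^ 2| := by
    rw [hBA, abs_mul, abs_of_pos hc, ← Finset.sum_sub_distrib]
    calc c * |∑ n : Fin N, ((T n) ^ 2 - (T n + v n) ^ 2)|
        ≤ c * ∑ n : Fin N, |(T n) ^ 2 - (T n + v n) ^ 2| :=
          mul_le_mul_of_nonneg_left (Finset.abs_sum_le_sum_abs _ _) hc.le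
    _ = ∑ n, c * |2 * T n * v n + (v n) ^ 2| := by
        rw [Finset.mul_sum]
        refine Finset.sum_congr rfl fun n _ => ?_
        congr 1
        have : (T n) ^ 2 - (T n + v n) ^ 2 = -(2 * T n * v n + (v n) ^ 2) := by ring
        rw [this, abs_neg]
  calc |B - A| / (A * B) ≤ (∑ n, c * |2 * T n * v n + (v n) ^ 2|) / (A * B) := by
        gcongr
  _ = ∑ n, c * |2 * T n * v n + (v n) ^ 2| / (A * B) := Finset.sum_div _ _ _
  _ ≤ ∑ n, (3 * c * |T n| + Real.sqrt c / 2) * |v n| := by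
      refine Finset.sum_le_sum fun n _ => ?_
      refine term_bound c (T n) (v n) A B hc ?_ hB1
      rw [hAdef]
      have h5 : (T n + v n) ^ 2 ≤ ∑ m, (T m + v m) ^ 2 :=
        Finset.single_le_sum (f := fun m => (T m + v m) ^ 2)
          (fun i _ => sq_nonneg _) (Finset.mem_univ n)
      nlinarith [mul_le_mul_of_nonneg_left h5 hc.le]

/-- Statistical stability of the variance of the image: there is `C > 0`, depending only on
`α, ε, N, |ρ₀|`, such that for every probability space and every random vector
`ν = (ν_1, …, ν_N)` with `E[ν_n] = 0` and `E[ν_n²] < ∞`, the image value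
`G(ν) = |ρ₀| [1 + α(1−ε)(1/N) Σ_n (T_n + ν_n)²]⁻¹` satisfies
`Var[G(ν)] = E[G(ν)²] − (E[G(ν)])² ≤ C Σ_n E[ν_n²]`. -/
theorem variance_image_stability
    (N : ℕ) (hN : 1 ≤ N) (α ε ρ : ℝ) (hα : 0 < α) (hε0 : 0 < ε) (hε1 : ε < 1)
    (hρ : 0 < ρ) (T : Fin N → ℝ) :
    ∃ C : ℝ, 0 < C ∧
      ∀ (Ω : Type) (_ : MeasurableSpace Ω) (μ : Measure Ω),
        IsProbabilityMeasure μ →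
        ∀ ν : Fin N → Ω → ℝ,
          (∀ n, Measurable (ν n)) →
          (∀ n, Integrable (ν n) μ) →
          (∀ n, ∫ x, ν n x ∂μ = 0) →
          (∀ n, Integrable (fun x => (ν n x) ^ 2) μ) →
          (∫ x, (ρ * (1 + α * (1 - ε) * ((1 : ℝ) / N)
                * ∑ n : Fin N, (T n + ν n x) ^ 2)⁻¹) ^ 2 ∂μ)
              - (∫ x, ρ * (1 + α * (1 - ε) * ((1 : ℝ) / N)
                * ∑ n : Fin N, (T n + ν n x) ^ 2)⁻¹ ∂μ) ^ 2
            ≤ C * ∑ n : Fin N, ∫ x, (ν n x) ^ 2 ∂μ := by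
  have hNpos : (0:ℝ) < (N:ℝ) := by
    have : 0 < N := hN
    exact_mod_cast this
  set c : ℝ := α * (1 - ε) * ((1:ℝ) / N) with hcdef
  have hc : 0 < c := by
    rw [hcdef]
    have h1 : (0:ℝ) < 1 - ε := by linarith
    positivity
  set a : Fin N → ℝ := fun n => ρ * (3 * c * |T n| + Real.sqrt c / 2) with hadef
  refine ⟨(∑ n, (a n) ^ 2) + 1, by positivity, ?_⟩
  intro Ω _ μ hμ ν hmeas hint hmean hint2
  set K : ℝ := ∑ n, (a n) ^ 2 with hKdef
  have hKnn : 0 ≤ K := Finset.sum_nonneg fun n _ => sq_nonneg _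
  set G : Ω → ℝ := fun x => ρ * (1 + c * ∑ n, (T n + ν n x) ^ 2)⁻¹ with hGdef
  set g0 : ℝ := ρ * (1 + c * ∑ n : Fin N, (T n) ^ 2)⁻¹ with hg0def
  show (∫ x, (G x) ^ 2 ∂μ) - (∫ x, G x ∂μ) ^ 2 ≤ (K + 1) * ∑ n, ∫ x, (ν n x) ^ 2 ∂μ
  -- basic positivity facts
  have hSx : ∀ x : Ω, (0:ℝ) ≤ ∑ n, (T n + ν n x) ^ 2 :=
    fun x => Finset.sum_nonneg fun n _ => sq_nonneg _
  have hA1 : ∀ x : Ω, (1:ℝ) ≤ 1 + c * ∑ n, (T n + ν n x) ^ 2 := by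
    intro x
    nlinarith [mul_nonneg hc.le (hSx x)]
  have hGnn : ∀ x, 0 ≤ G x := by
    intro x
    rw [hGdef]
    have := hA1 x
    positivity
  have hGle : ∀ x, G x ≤ ρ := by
    intro x
    rw [hGdef]
    have h1 := hA1 x
    have h2 : (1 + c * ∑ n, (T n + ν n x) ^ 2)⁻¹ ≤ 1 := inv_le_one_of_one_le₀ h1
    nlinarith
  -- measurability and integrability
  have hSmeas : Measurable (fun x => ∑ n, (T n + ν n x) ^ 2) :=
    Finset.measurable_sum _ fun n _ => (measurable_const.add (hmeas n)).pow_const 2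
  have hGmeas : Measurable G :=
    ((measurable_const.add (hSmeas.const_mul c)).inv).const_mul ρ
  have hGint : Integrable G μ := by
    refine (integrable_const ρ).mono' hGmeas.aestronglyMeasurable (ae_of_all _ fun x => ?_)
    rw [Real.norm_eq_abs, abs_of_nonneg (hGnn x)]
    exact hGle x
  have hG2int : Integrable (fun x => (G x) ^ 2) μ := by
    refine (integrable_const (ρ ^ 2)).mono'
      (hGmeas.pow_const 2).aestronglyMeasurable (ae_of_all _ fun x => ?_)
    rw [Real.norm_eq_abs, abs_of_nonneg (sq_nonneg _)]
    exact pow_le_pow_left₀ (hGnn x) (hGle x) 2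
  have hdiffeq : (fun x => (G x - g0) ^ 2)
      = fun x => (G x) ^ 2 - (2 * g0) * G x + g0 ^ 2 := by
    funext x; ring
  have hdiff2int : Integrable (fun x => (G x - g0) ^ 2) μ := by
    rw [hdiffeq]
    exact (hG2int.sub (hGint.const_mul (2 * g0))).add (integrable_const _)
  have hKint : Integrable (fun x => K * ∑ n, (ν n x) ^ 2) μ :=
    (integrable_finset_sum _ fun n _ => hint2 n).const_mul K
  -- pointwise bound
  have hpt : ∀ x, (G x - g0) ^ 2 ≤ K * ∑ n, (ν n x) ^ 2 := by
    intro x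
    have hb := inv_diff_bound N c hc T (fun n => ν n x)
    have h1 : |G x - g0| ≤ ∑ n, a n * |ν n x| := by
      have heq : G x - g0 = ρ * ((1 + c * ∑ n, (T n + ν n x) ^ 2)⁻¹
          - (1 + c * ∑ n : Fin N, (T n) ^ 2)⁻¹) := by
        rw [hGdef, hg0def]; ring
      rw [heq, abs_mul, abs_of_pos hρ]
      calc ρ * |(1 + c * ∑ n, (T n + ν n x) ^ 2)⁻¹ - (1 + c * ∑ n : Fin N, (T n) ^ 2)⁻¹|
          ≤ ρ * ∑ n, (3 * c * |T n| + Real.sqrt c / 2) * |ν n x| :=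
            mul_le_mul_of_nonneg_left hb hρ.le
      _ = ∑ n, a n * |ν n x| := by
          rw [Finset.mul_sum]
          refine Finset.sum_congr rfl fun n _ => ?_
          simp only [hadef]
          ring
    have h2 : (G x - g0) ^ 2 ≤ (∑ n, a n * |ν n x|) ^ 2 := by
      rw [← sq_abs (G x - g0)]
      exact pow_le_pow_left₀ (abs_nonneg _) h1 2
    have h3 := Finset.sum_mul_sq_le_sq_mul_sq Finset.univ a (fun n => |ν n x|)
    have h4 : ∑ n, |ν n x| ^ 2 = ∑ n, (ν n x) ^ 2 := by
      refine Finset.sum_congr rfl fun n _ => sq_abs _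
    calc (G x - g0) ^ 2 ≤ (∑ n, a n * |ν n x|) ^ 2 := h2
    _ ≤ (∑ n, (a n) ^ 2) * ∑ n, |ν n x| ^ 2 := h3
    _ = K * ∑ n, (ν n x) ^ 2 := by rw [h4]
  -- expansion of E[(G-g0)^2]
  have hI1 : Integrable (fun x => G x ^ 2 - 2 * g0 * G x) μ := by
    exact hG2int.sub (hGint.const_mul (2 * g0))
  have hI2 : Integrable (fun x => 2 * g0 * G x) μ := hGint.const_mul (2 * g0)
  have hexp : ∫ x, (G x - g0) ^ 2 ∂μ
      = (∫ x, (G x) ^ 2 ∂μ) - 2 * g0 * (∫ x, G x ∂μ) + g0 ^ 2 := by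
    rw [hdiffeq, integral_add hI1 (integrable_const _),
      integral_sub hG2int hI2, integral_const_mul, integral_const]
    simp [measure_univ]
  have hsum0 : 0 ≤ ∑ n, ∫ x, (ν n x) ^ 2 ∂μ :=
    Finset.sum_nonneg fun n _ => integral_nonneg fun x => sq_nonneg _
  calc (∫ x, (G x) ^ 2 ∂μ) - (∫ x, G x ∂μ) ^ 2
      ≤ ∫ x, (G x - g0) ^ 2 ∂μ := by
        nlinarith [sq_nonneg ((∫ x, G x ∂μ) - g0), hexp]
  _ ≤ ∫ x, K * ∑ n, (ν n x) ^ 2 ∂μ := integral_mono hdiff2int hKint fun x => hpt x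
  _ = K * ∑ n, ∫ x, (ν n x) ^ 2 ∂μ := by
      rw [integral_const_mul, integral_finset_sum _ fun n _ => hint2 n]
  _ ≤ (K + 1) * ∑ n, ∫ x, (ν n x) ^ 2 ∂μ := by nlinarith
end
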